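/- arXiv:1302.0793 — 7 statements merged into one kernel-verified Lean document; each statement's English description precedes it below -/
import Mathlib

section
/- For any real numbers V_i, V_j, any D > 0, and any h > 0, the Wang–Peskin–Elston jump rates a_{ij} = (D/h²)·A(V_j − V_i) and a_{ji} = (D/h²)·A(V_i − V_j) satisfy the detailed balance relation a_{ij}·exp(−V_i) = a_{ji}·exp(−V_j). -/
open Real

/-- The Wang–Peskin–Elston weight function: `A(u) = u / (exp u - 1)` for `u ≠ 0`,
and `A(0) = 1`. -/
noncomputable def wpeA (u : ℝ) : ℝ :=
  if u = 0 then 1 else u / (Real.exp u - 1)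

lemma wpeA_key (u : ℝ) : wpeA u = wpeA (-u) * Real.exp (-u) := by
  unfold wpeA
  by_cases hu : u = 0
  · simp [hu]
  · rw [if_neg hu, if_neg (neg_ne_zero.mpr hu)]
    have h1 : Real.exp u - 1 ≠ 0 := by
      intro h
      have h' : Real.exp u = 1 := by linarith
      exact hu (by simpa using h')
    have h2 : Real.exp (-u) - 1 ≠ 0 := by
      intro h
      have h' : Real.exp (-u) = 1 := by linarith
      have : -u = 0 := by simpa using h'
      exact hu (by linarith)
    field_simp
    rw [Real.exp_neg]
    have he := Real.exp_pos u
    field_simp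
    ring

/-- Detailed balance for the uniform-mesh Wang–Peskin–Elston jump rates:
`a_{ij} exp(-V_i) = a_{ji} exp(-V_j)` where `a_{ij} = (D/h²) A(V_j - V_i)`. -/
theorem wpe_detailed_balance (Vi Vj D h : ℝ) (hD : 0 < D) (hh : 0 < h) :
    (D / h ^ 2 * wpeA (Vj - Vi)) * Real.exp (-Vi)
      = (D / h ^ 2 * wpeA (Vi - Vj)) * Real.exp (-Vj) := by
  have := wpeA_key (Vj - Vi)
  rw [this]
  have : -(Vj - Vi) = Vi - Vj := by ring
  rw [this]
  have h3 : Real.exp (Vi - Vj) * Real.exp (-Vi) = Real.exp (-Vj) := by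
    rw [← Real.exp_add]; ring_nf
  linear_combination (D / h ^ 2 * wpeA (Vi - Vj)) * h3
end

section
/- Let ρ, V : ℝ → ℝ be twice continuously differentiable, let D > 0, and fix x ∈ ℝ. Then as h → 0⁺, the uniform Wang–Peskin–Elston discrete operator (D/h²)·[ A(V(x) − V(x−h))·ρ(x−h) − (A(V(x−h) − V(x)) + A(V(x+h) − V(x)))·ρ(x) + A(V(x) − V(x+h))·ρ(x+h) ] converges to D·(ρ''(x) + ρ'(x)·V'(x) + ρ(x)·V''(x)), which equals the right-hand side D·(ρ V' + ρ')'(x) of the one-dimensional Fokker–Planck equation; i.e., the Wang–Peskin–Elston discretization is consistent. -/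
open Real Filter

lemma expm1_ne_zero {u : ℝ} (hu : u ≠ 0) : Real.exp u - 1 ≠ 0 := by
  have := Real.exp_eq_one_iff u
  intro h
  exact hu ((Real.exp_eq_one_iff u).mp (by linarith [sub_eq_zero.mp h]))

lemma wpeA_neg (u : ℝ) : wpeA (-u) = wpeA u + u := by
  rcases eq_or_ne u 0 with rfl | hu
  · simp [wpeA]
  · have h1 : Real.exp u - 1 ≠ 0 := expm1_ne_zero hu
    have h2 : Real.exp (-u) - 1 ≠ 0 := expm1_ne_zero (neg_ne_zero.mpr hu)
    have h3 : Real.exp (-u) = (Real.exp u)⁻¹ := Real.exp_neg u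
    have h4 : Real.exp u ≠ 0 := (Real.exp_pos u).ne'
    have h5 : (1:ℝ) - Real.exp u ≠ 0 := fun h => h2 (by rw [h3]; field_simp; linarith)
    simp only [wpeA, if_neg hu, if_neg (neg_ne_zero.mpr hu)]
    rw [h3]
    field_simp
    ring_nf

noncomputable def gA (u : ℝ) : ℝ := if u = 0 then -(1/2) else (wpeA u - 1) / u

lemma wpeA_eq (u : ℝ) : wpeA u = 1 + u * gA u := by
  rcases eq_or_ne u 0 with rfl | hu
  · simp [wpeA, gA]
  · simp only [gA, if_neg hu]
    field_simp
    ring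

lemma gA_tendsto : Tendsto gA (nhds 0) (nhds (-(1/2))) := by
  have key : ∀ u : ℝ, |u| ≤ 1 → |gA u - (-(1/2))| ≤ 4 * |u| := by
    intro u hu1
    rcases eq_or_ne u 0 with rfl | hu
    · simp [gA]
    · have hE : Real.exp u - 1 ≠ 0 := expm1_ne_zero hu
      have hau : 0 < |u| := abs_pos.mpr hu
      -- lower bound on |exp u - 1|
      have hElb : |u| / 4 ≤ |Real.exp u - 1| := by
        rcases lt_or_gt_of_ne hu with hneg | hpos
        · -- u < 0
          have hb := Real.exp_bound (x := u) hu1 (n := 2) (by norm_num)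
          have hsum : ∑ m ∈ Finset.range 2, u ^ m / m.factorial = 1 + u := by
            simp [Finset.sum_range_succ]
          rw [hsum] at hb
          have hb2 : |Real.exp u - (1 + u)| ≤ 3/4 * u^2 := by
            have heq : |u|^2 * (((2:ℕ).succ : ℝ) / (((2:ℕ).factorial : ℝ) * 2)) = 3/4 * u^2 := by
              rw [sq_abs]; norm_num [Nat.factorial]; ring
            calc |Real.exp u - (1+u)| ≤ _ := hb
              _ = 3/4 * u^2 := by rw [← heq]; norm_num
          have h5 : Real.exp u ≤ 1 + u + 3/4 * u^2 := by
            have := (abs_sub_le_iff.mp hb2).1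
            linarith
          have habs : |Real.exp u - 1| = 1 - Real.exp u := by
            rw [abs_of_nonpos]
            · ring
            · have : Real.exp u ≤ 1 := by
                rw [← Real.exp_zero]
                exact Real.exp_le_exp.mpr hneg.le
              linarith
          rw [habs]
          have hu2 : u^2 ≤ -u := by
            have : |u| = -u := abs_of_neg hneg
            nlinarith [sq_abs u, this, hu1]
          have : |u| = -u := abs_of_neg hneg
          nlinarith
        · -- u > 0
          have : |Real.exp u - 1| = Real.exp u - 1 := by
            rw [abs_of_nonneg]
            have := Real.add_one_le_exp u
            linarith
          rw [this, abs_of_pos hpos]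
          have := Real.add_one_le_exp u
          linarith
      -- numerator bound
      set E := Real.exp u - 1 with hEdef
      have hb := Real.exp_bound (x := u) hu1 (n := 3) (by norm_num)
      have hsum : ∑ m ∈ Finset.range 3, u ^ m / m.factorial = 1 + u + u^2/2 := by
        norm_num [Finset.sum_range_succ, Nat.factorial]
      rw [hsum] at hb
      have hR : |E - u - u^2/2| ≤ 2/9 * |u|^3 := by
        have heq : |u|^3 * (((3:ℕ).succ : ℝ) / (((3:ℕ).factorial : ℝ) * 3)) = 2/9 * |u|^3 := by
          norm_num [Nat.factorial]; ring
        calc |E - u - u^2/2| = |Real.exp u - (1 + u + u^2/2)| := by rw [hEdef]; ring_nf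
          _ ≤ _ := hb
          _ = 2/9 * |u|^3 := by rw [← heq]; norm_num
      set R := E - u - u^2/2 with hRdef
      have hN : |2*u - 2*E + u*E| ≤ 2 * |u|^3 := by
        have hNeq : 2*u - 2*E + u*E = u^3/2 + (u - 2) * R := by
          rw [hRdef]; ring
        rw [hNeq]
        have h1 : |u^3/2 + (u-2)*R| ≤ |u^3/2| + |(u-2)*R| := abs_add_le _ _
        have h2 : |u^3/2| = |u|^3/2 := by
          rw [abs_div, abs_pow]; norm_num
        have h3 : |(u-2)*R| ≤ 3 * (2/9 * |u|^3) := by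
          rw [abs_mul]
          have : |u - 2| ≤ 3 := by
            have := abs_le.mp hu1
            rw [abs_le]; constructor <;> linarith
          have hR0 : (0:ℝ) ≤ |R| := abs_nonneg _
          nlinarith [hR]
        nlinarith [pow_pos hau 3]
      -- assemble
      have hgval : gA u - (-(1/2)) = (2*u - 2*E + u*E) / (2*u*E) := by
        simp only [gA, if_neg hu, wpeA, if_neg hu, ← hEdef]
        field_simp
        ring
      rw [hgval, abs_div]
      rw [div_le_iff₀ (by positivity)]
      have h2uE : |2*u*E| = 2 * |u| * |E| := by
        rw [abs_mul, abs_mul]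
        norm_num
      rw [h2uE]
      have hElb' : |u|/4 ≤ |E| := hElb
      calc |2*u - 2*E + u*E| ≤ 2 * |u|^3 := hN
        _ = 4 * |u| * (2 * |u| * (|u|/4)) := by ring
        _ ≤ 4 * |u| * (2 * |u| * |E|) := by
            have : 2 * |u| * (|u|/4) ≤ 2 * |u| * |E| := by
              apply mul_le_mul_of_nonneg_left hElb' (by positivity)
            nlinarith [abs_nonneg u]
  -- squeeze
  have hg0 : Tendsto (fun u : ℝ => 4 * |u|) (nhds (0:ℝ)) (nhds 0) := by
    have := (continuous_abs.tendsto (0:ℝ)).const_mul (4:ℝ)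
    simpa using this
  have hev : ∀ᶠ u : ℝ in nhds 0, ‖gA u - (-(1/2))‖ ≤ 4 * |u| := by
    filter_upwards [Metric.ball_mem_nhds (0:ℝ) one_pos] with u hu
    have : |u| ≤ 1 := by
      have := Metric.mem_ball.mp hu
      rw [Real.dist_eq, sub_zero] at this
      exact this.le
    simpa [Real.norm_eq_abs] using key u this
  have h0 : Tendsto (fun u : ℝ => gA u - (-(1/2))) (nhds 0) (nhds 0) :=
    squeeze_zero_norm' hev hg0
  have := h0.add_const (-(1/2))
  simpa using this

lemma tendsto_add_right_nhdsNe (x : ℝ) :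
    Tendsto (fun h : ℝ => x + h) (nhdsWithin 0 (Set.Ioi 0)) (nhdsWithin x {x}ᶜ) := by
  rw [tendsto_nhdsWithin_iff]
  constructor
  · have : Tendsto (fun h : ℝ => x + h) (nhds 0) (nhds x) := by
      simpa using (tendsto_const_nhds.add tendsto_id : Tendsto (fun h : ℝ => x + h) (nhds 0) (nhds (x + 0)))
    exact this.mono_left nhdsWithin_le_nhds
  · filter_upwards [self_mem_nhdsWithin] with h hh
    simp only [Set.mem_compl_iff, Set.mem_singleton_iff]
    intro hc
    have : h = 0 := by linarith [(Set.mem_Ioi.mp hh), hc]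
    exact absurd this (ne_of_gt (Set.mem_Ioi.mp hh))

lemma tendsto_sub_right_nhdsNe (x : ℝ) :
    Tendsto (fun h : ℝ => x - h) (nhdsWithin 0 (Set.Ioi 0)) (nhdsWithin x {x}ᶜ) := by
  rw [tendsto_nhdsWithin_iff]
  constructor
  · have : Tendsto (fun h : ℝ => x - h) (nhds 0) (nhds (x - 0)) :=
      tendsto_const_nhds.sub tendsto_id
    simpa using this.mono_left nhdsWithin_le_nhds
  · filter_upwards [self_mem_nhdsWithin] with h hh
    simp only [Set.mem_compl_iff, Set.mem_singleton_iff]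
    intro hc
    have hh' := Set.mem_Ioi.mp hh
    have : h = 0 := by linarith
    exact absurd this (ne_of_gt hh')

lemma slope_right {f : ℝ → ℝ} {f' x : ℝ} (hf : HasDerivAt f f' x) :
    Tendsto (fun h : ℝ => (f (x + h) - f x) / h) (nhdsWithin 0 (Set.Ioi 0)) (nhds f') := by
  have hs := hasDerivAt_iff_tendsto_slope.mp hf
  have := hs.comp (tendsto_add_right_nhdsNe x)
  refine this.congr' ?_
  filter_upwards [self_mem_nhdsWithin] with h hh
  simp only [Function.comp, slope, vsub_eq_sub, add_sub_cancel_left, smul_eq_mul]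
  rw [mul_comm, ← div_eq_mul_inv]

lemma slope_left {f : ℝ → ℝ} {f' x : ℝ} (hf : HasDerivAt f f' x) :
    Tendsto (fun h : ℝ => (f x - f (x - h)) / h) (nhdsWithin 0 (Set.Ioi 0)) (nhds f') := by
  have hs := hasDerivAt_iff_tendsto_slope.mp hf
  have := hs.comp (tendsto_sub_right_nhdsNe x)
  refine this.congr' ?_
  filter_upwards [self_mem_nhdsWithin] with h hh
  have hh' : h ≠ 0 := ne_of_gt (Set.mem_Ioi.mp hh)
  simp only [Function.comp, slope, vsub_eq_sub, smul_eq_mul]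
  have hxh : x - h - x = -h := by ring
  rw [hxh]
  field_simp
  ring


lemma deriv_differentiable {f : ℝ → ℝ} (hf : ContDiff ℝ 2 f) :
    Differentiable ℝ (deriv f) := by
  have h2 : ContDiff ℝ ((1 : ℕ) + 1) f := by exact_mod_cast hf
  rw [contDiff_succ_iff_deriv] at h2
  exact h2.2.2.differentiable (by simp)

lemma second_diff {f : ℝ → ℝ} (hf : ContDiff ℝ 2 f) (x : ℝ) :
    Tendsto (fun h : ℝ => (f (x + h) + f (x - h) - 2 * f x) / h ^ 2)
      (nhdsWithin 0 (Set.Ioi 0)) (nhds (deriv (deriv f) x)) := by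
  have hd1 : Differentiable ℝ f := hf.differentiable (by norm_num)
  have hd2 : Differentiable ℝ (deriv f) := deriv_differentiable hf
  have hderiv : ∀ h : ℝ, HasDerivAt (fun h : ℝ => f (x + h) + f (x - h) - 2 * f x)
      (deriv f (x + h) - deriv f (x - h)) h := by
    intro h
    have h1 : HasDerivAt (fun h : ℝ => f (x + h)) (deriv f (x + h)) h := by
      have hi : HasDerivAt (fun h : ℝ => x + h) 1 h := by
        simpa using (hasDerivAt_id h).const_add x
      simpa [Function.comp_def] using ((hd1 (x + h)).hasDerivAt).comp h hi
    have h2 : HasDerivAt (fun h : ℝ => f (x - h)) (-(deriv f (x - h))) h := by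
      have hi : HasDerivAt (fun h : ℝ => x - h) (-1) h := by
        simpa using (hasDerivAt_id h).const_sub x
      have := ((hd1 (x - h)).hasDerivAt).comp h hi
      simpa [mul_comm, Function.comp_def] using this
    simpa [sub_eq_add_neg] using (h1.add h2).sub_const (2 * f x)
  apply HasDerivAt.lhopital_zero_nhdsGT
    (f' := fun h => deriv f (x + h) - deriv f (x - h)) (g' := fun h => 2 * h)
  · filter_upwards with h using hderiv h
  · filter_upwards with h using by simpa using hasDerivAt_pow 2 h
  · filter_upwards [self_mem_nhdsWithin] with h hh
    exact mul_ne_zero two_ne_zero (ne_of_gt (Set.mem_Ioi.mp hh))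
  · have hcf : Continuous f := hd1.continuous
    have hc : Continuous fun h : ℝ => f (x + h) + f (x - h) - 2 * f x :=
      ((hcf.comp (continuous_const.add continuous_id)).add
        (hcf.comp (continuous_const.sub continuous_id))).sub continuous_const
    have := hc.tendsto 0
    simp only [add_zero, sub_zero] at this
    have h0 : f x + f x - 2 * f x = 0 := by ring
    rw [h0] at this
    exact this.mono_left nhdsWithin_le_nhds
  · have : Tendsto (fun h : ℝ => h ^ 2) (nhds 0) (nhds 0) := by
      simpa using (continuous_pow 2).tendsto (0 : ℝ)
    exact this.mono_left nhdsWithin_le_nhds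
  · have hA : Tendsto (fun h : ℝ => (deriv f (x + h) - deriv f x) / h)
        (nhdsWithin 0 (Set.Ioi 0)) (nhds (deriv (deriv f) x)) :=
      slope_right (hd2 x).hasDerivAt
    have hB : Tendsto (fun h : ℝ => (deriv f x - deriv f (x - h)) / h)
        (nhdsWithin 0 (Set.Ioi 0)) (nhds (deriv (deriv f) x)) :=
      slope_left (hd2 x).hasDerivAt
    have hsum := (hA.add hB).div_const 2
    have heq : ∀ᶠ h : ℝ in nhdsWithin 0 (Set.Ioi 0),
        ((deriv f (x + h) - deriv f x) / h + (deriv f x - deriv f (x - h)) / h) / 2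
          = (deriv f (x + h) - deriv f (x - h)) / (2 * h) := by
      filter_upwards [self_mem_nhdsWithin] with h hh
      have hh' : h ≠ 0 := ne_of_gt (Set.mem_Ioi.mp hh)
      rw [← add_div, div_div]
      congr 1
      · ring
      · ring
    have := hsum.congr' heq
    simpa using this

/-- Consistency of the uniform Wang–Peskin–Elston discretization: for `ρ, V` twice
continuously differentiable and `D > 0`, as `h → 0⁺` the discrete operator converges
to `D (ρ'' + ρ' V' + ρ V'')(x)`, the right-hand side of the Fokker–Planck equation. -/
theorem wpe_uniform_consistency (ρ V : ℝ → ℝ)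
    (hρ : ContDiff ℝ 2 ρ) (hV : ContDiff ℝ 2 V) (D : ℝ) (hD : 0 < D) (x : ℝ) :
    Tendsto
      (fun h : ℝ => D / h ^ 2 *
        (wpeA (V x - V (x - h)) * ρ (x - h)
          - (wpeA (V (x - h) - V x) + wpeA (V (x + h) - V x)) * ρ x
          + wpeA (V x - V (x + h)) * ρ (x + h)))
      (nhdsWithin (0 : ℝ) (Set.Ioi 0))
      (nhds (D * (deriv (deriv ρ) x + deriv ρ x * deriv V x + ρ x * deriv (deriv V) x))) := by
  have hρd : Differentiable ℝ ρ := hρ.differentiable (by norm_num)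
  have hVd : Differentiable ℝ V := hV.differentiable (by norm_num)
  have hρx : HasDerivAt ρ (deriv ρ x) x := (hρd x).hasDerivAt
  have hVx : HasDerivAt V (deriv V x) x := (hVd x).hasDerivAt
  set L := nhdsWithin (0 : ℝ) (Set.Ioi 0) with hL
  -- component limits
  have T1 := second_diff hρ x
  have T4 := second_diff hV x
  have Ta : Tendsto (fun h : ℝ => (V x - V (x - h)) / h) L (nhds (deriv V x)) :=
    slope_left hVx
  have Tb : Tendsto (fun h : ℝ => (V x - V (x + h)) / h) L (nhds (-(deriv V x))) := by
    have := (slope_right hVx).neg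
    refine this.congr (fun h => ?_)
    rw [← neg_div]
    ring_nf
  have Tρm : Tendsto (fun h : ℝ => (ρ (x - h) - ρ x) / h) L (nhds (-(deriv ρ x))) := by
    have := (slope_left hρx).neg
    refine this.congr (fun h => ?_)
    rw [← neg_div]
    ring_nf
  have Tρp : Tendsto (fun h : ℝ => (ρ (x + h) - ρ x) / h) L (nhds (deriv ρ x)) :=
    slope_right hρx
  have hVc : Continuous V := hVd.continuous
  have Tazero : Tendsto (fun h : ℝ => V x - V (x - h)) L (nhds 0) := by
    have : Tendsto (fun h : ℝ => V x - V (x - h)) (nhds 0) (nhds (V x - V (x - 0))) :=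
      (tendsto_const_nhds.sub ((hVc.tendsto _).comp (tendsto_const_nhds.sub tendsto_id)))
    simpa using this.mono_left nhdsWithin_le_nhds
  have Tbzero : Tendsto (fun h : ℝ => V x - V (x + h)) L (nhds 0) := by
    have : Tendsto (fun h : ℝ => V x - V (x + h)) (nhds 0) (nhds (V x - V (x + 0))) :=
      (tendsto_const_nhds.sub ((hVc.tendsto _).comp (tendsto_const_nhds.add tendsto_id)))
    simpa using this.mono_left nhdsWithin_le_nhds
  have Tga : Tendsto (fun h : ℝ => gA (V x - V (x - h))) L (nhds (-(1/2))) :=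
    gA_tendsto.comp Tazero
  have Tgb : Tendsto (fun h : ℝ => gA (V x - V (x + h))) L (nhds (-(1/2))) :=
    gA_tendsto.comp Tbzero
  -- the reformulated sum
  have TS : Tendsto (fun h : ℝ =>
      D * ((ρ (x + h) + ρ (x - h) - 2 * ρ x) / h ^ 2
        + gA (V x - V (x - h)) * ((V x - V (x - h)) / h) * ((ρ (x - h) - ρ x) / h)
        + gA (V x - V (x + h)) * ((V x - V (x + h)) / h) * ((ρ (x + h) - ρ x) / h)
        + ((V (x + h) + V (x - h) - 2 * V x) / h ^ 2) * ρ x)) L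
      (nhds (D * (deriv (deriv ρ) x + deriv ρ x * deriv V x + ρ x * deriv (deriv V) x))) := by
    have := (((T1.add ((Tga.mul Ta).mul Tρm)).add ((Tgb.mul Tb).mul Tρp)).add
      (T4.mul (tendsto_const_nhds (x := ρ x)))).const_mul D
    convert this using 2
    ring
  -- eventual equality with the original expression
  refine TS.congr' ?_
  filter_upwards [self_mem_nhdsWithin] with h hh
  have hh' : h ≠ 0 := ne_of_gt (Set.mem_Ioi.mp hh)
  have e1 : wpeA (V (x - h) - V x) = wpeA (V x - V (x - h)) + (V x - V (x - h)) := by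
    rw [show V (x - h) - V x = -(V x - V (x - h)) by ring, wpeA_neg]
  have e2 : wpeA (V (x + h) - V x) = wpeA (V x - V (x + h)) + (V x - V (x + h)) := by
    rw [show V (x + h) - V x = -(V x - V (x + h)) by ring, wpeA_neg]
  rw [e1, e2, wpeA_eq (V x - V (x - h)), wpeA_eq (V x - V (x + h))]
  field_simp
  ring
end

section
/- Let f : ℝ → ℝ be three times differentiable at x₀ (f'' exists in a neighborhood of x₀ and is differentiable at x₀). Then for every ε > 0 there exists δ > 0 such that for all 0 < h₁ < δ and 0 < h₂ < δ, | (2/(h₁+h₂))·[ (f(x₀+h₂) − f(x₀))/h₂ − (f(x₀) − f(x₀−h₁))/h₁ ] − f''(x₀) − ((h₂ − h₁)/3)·f'''(x₀) | ≤ ε·(h₁ + h₂). In particular, the spatial truncation error of the non-uniform three-point second-difference operator is of order h₂ − h₁ at x₀, and the operator is second-order accurate when h₁ = h₂. -/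
open Real Filter

private lemma uIcc_abs_bound {x₀ h x : ℝ} (hx : x ∈ Set.uIcc x₀ (x₀ + h)) :
    |x - x₀| ≤ |h| := by
  rcases le_total x₀ (x₀ + h) with hle | hle
  · rw [Set.uIcc_of_le hle] at hx
    obtain ⟨h1, h2⟩ := hx
    rw [abs_of_nonneg (by linarith), abs_of_nonneg (by linarith : (0:ℝ) ≤ h)]
    linarith
  · rw [Set.uIcc_of_ge hle] at hx
    obtain ⟨h1, h2⟩ := hx
    rw [abs_of_nonpos (by linarith), abs_of_nonpos (by linarith : h ≤ 0)]
    linarith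

private lemma taylor3_peano (f : ℝ → ℝ) (x₀ : ℝ)
    (hf : ∀ᶠ x in nhds x₀, DifferentiableAt ℝ f x)
    (hf' : ∀ᶠ x in nhds x₀, DifferentiableAt ℝ (deriv f) x)
    (hf'' : DifferentiableAt ℝ (deriv (deriv f)) x₀) :
    ∀ ε > 0, ∃ δ > 0, ∀ h : ℝ, |h| < δ →
      |f (x₀ + h) - f x₀ - deriv f x₀ * h - deriv (deriv f) x₀ * h ^ 2 / 2
        - deriv (deriv (deriv f)) x₀ * h ^ 3 / 6| ≤ ε * |h| ^ 3 := by
  intro ε hε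
  set a := deriv f x₀
  set b := deriv (deriv f) x₀
  set c := deriv (deriv (deriv f)) x₀
  have hlo : ∀ᶠ x in nhds x₀, ‖deriv (deriv f) x - b - (x - x₀) * c‖ ≤ ε * ‖x - x₀‖ := by
    have := hf''.hasDerivAt.isLittleO
    have h2 := (this.def hε)
    filter_upwards [h2] with x hx
    simpa [smul_eq_mul, mul_comm] using hx
  obtain ⟨δ, hδ, hball⟩ := Metric.eventually_nhds_iff.mp (hf.and (hf'.and hlo))
  refine ⟨δ, hδ, ?_⟩
  intro h hh
  set R : ℝ → ℝ := fun x => f x - f x₀ - a * (x - x₀) - b * (x - x₀) ^ 2 / 2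
    - c * (x - x₀) ^ 3 / 6 with hR
  set R' : ℝ → ℝ := fun x => deriv f x - a - b * (x - x₀) - c * (x - x₀) ^ 2 / 2 with hR'
  set R'' : ℝ → ℝ := fun x => deriv (deriv f) x - b - c * (x - x₀) with hR''
  set s : Set ℝ := Set.uIcc x₀ (x₀ + h) with hs
  have habs : ∀ x ∈ s, |x - x₀| ≤ |h| := fun x hx => uIcc_abs_bound hx
  have hmem : ∀ x ∈ s, dist x x₀ < δ := by
    intro x hx
    rw [Real.dist_eq]
    exact lt_of_le_of_lt (habs x hx) hh
  have key2 : ∀ x ∈ s, ‖R'' x‖ ≤ ε * |h| := by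
    intro x hx
    have h1 := (hball (hmem x hx)).2.2
    have h2 : ‖R'' x‖ = ‖deriv (deriv f) x - b - (x - x₀) * c‖ := by
      simp only [hR'']; ring_nf
    rw [h2]
    refine h1.trans ?_
    have := habs x hx
    rw [Real.norm_eq_abs]
    nlinarith [abs_nonneg h]
  have hd1 : ∀ x ∈ s, HasDerivWithinAt R' (R'' x) s x := by
    intro x hx
    have hdf' : DifferentiableAt ℝ (deriv f) x := (hball (hmem x hx)).2.1
    have hda : HasDerivAt R' (deriv (deriv f) x - b - c * (x - x₀)) x := by
      have h1 : HasDerivAt (deriv f) (deriv (deriv f) x) x := hdf'.hasDerivAt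
      have h2 : HasDerivAt (fun x : ℝ => a + b * (x - x₀) + c * (x - x₀) ^ 2 / 2)
          (0 + (b * 1) + c * (2 * (x - x₀) ^ 1 * 1) / 2) x := by
        apply ((hasDerivAt_const x a).add (((hasDerivAt_id x).sub_const x₀).const_mul b)).add
        exact ((((hasDerivAt_id x).sub_const x₀).pow 2).const_mul c).div_const 2
      have h3 := h1.sub h2
      have hfun : R' = fun x => deriv f x - (a + b * (x - x₀) + c * (x - x₀) ^ 2 / 2) := by
        ext y; simp only [hR']; ring
      rw [hfun]
      refine h3.congr_deriv ?_
      ring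
    exact hda.hasDerivWithinAt
  have step1 : ∀ x ∈ s, ‖R' x‖ ≤ ε * |h| * |h| := by
    intro x hx
    have hx₀ : x₀ ∈ s := Set.left_mem_uIcc
    have hmvt := Convex.norm_image_sub_le_of_norm_hasDerivWithin_le hd1 key2
      (convex_uIcc _ _) hx₀ hx
    have hR'0 : R' x₀ = 0 := by simp [hR', a]
    rw [hR'0, sub_zero] at hmvt
    refine hmvt.trans ?_
    rw [Real.norm_eq_abs]
    exact mul_le_mul_of_nonneg_left (habs x hx) (by positivity)
  have hd0 : ∀ x ∈ s, HasDerivWithinAt R (R' x) s x := by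
    intro x hx
    have hdf : DifferentiableAt ℝ f x := (hball (hmem x hx)).1
    have hda : HasDerivAt R (deriv f x - a - b * (x - x₀) - c * (x - x₀) ^ 2 / 2) x := by
      have h1 : HasDerivAt f (deriv f x) x := hdf.hasDerivAt
      have h2 : HasDerivAt (fun x : ℝ => f x₀ + a * (x - x₀) + b * (x - x₀) ^ 2 / 2
          + c * (x - x₀) ^ 3 / 6)
          (0 + a * 1 + b * (2 * (x - x₀) ^ 1 * 1) / 2 + c * (3 * (x - x₀) ^ 2 * 1) / 6) x := by
        apply (((hasDerivAt_const x (f x₀)).add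
          (((hasDerivAt_id x).sub_const x₀).const_mul a)).add
          (((((hasDerivAt_id x).sub_const x₀).pow 2).const_mul b).div_const 2)).add
        exact ((((hasDerivAt_id x).sub_const x₀).pow 3).const_mul c).div_const 6
      have h3 := h1.sub h2
      have hfun : R = fun x => f x - (f x₀ + a * (x - x₀) + b * (x - x₀) ^ 2 / 2
          + c * (x - x₀) ^ 3 / 6) := by
        ext y; simp only [hR]; ring
      rw [hfun]
      refine h3.congr_deriv ?_
      ring
    exact (hda.congr_deriv (by simp only [hR'])).hasDerivWithinAt
  have final := Convex.norm_image_sub_le_of_norm_hasDerivWithin_le hd0 step1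
    (convex_uIcc _ _) Set.left_mem_uIcc Set.right_mem_uIcc
  have hR0 : R x₀ = 0 := by simp [hR]
  rw [hR0, sub_zero] at final
  have hRh : R (x₀ + h) = f (x₀ + h) - f x₀ - a * h - b * h ^ 2 / 2 - c * h ^ 3 / 6 := by
    simp [hR]
  rw [hRh] at final
  calc |f (x₀ + h) - f x₀ - a * h - b * h ^ 2 / 2 - c * h ^ 3 / 6|
      ≤ ε * |h| * |h| * ‖x₀ + h - x₀‖ := final
    _ = ε * |h| ^ 3 := by rw [show x₀ + h - x₀ = h by ring, Real.norm_eq_abs]; ring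

/-- Truncation error of the non-uniform three-point second-difference operator:
if `f''` exists in a neighborhood of `x₀` and is differentiable at `x₀`, then for
every `ε > 0` there is `δ > 0` such that for all `0 < h₁ < δ` and `0 < h₂ < δ`,
the operator differs from `f''(x₀) + ((h₂ - h₁)/3) f'''(x₀)` by at most `ε (h₁ + h₂)`.
In particular the truncation error is of order `h₂ - h₁`, and the operator is
second-order accurate when `h₁ = h₂`. -/
theorem nonuniform_second_difference_truncation (f : ℝ → ℝ) (x₀ : ℝ)
    (hf : ∀ᶠ x in nhds x₀, DifferentiableAt ℝ f x)
    (hf' : ∀ᶠ x in nhds x₀, DifferentiableAt ℝ (deriv f) x)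
    (hf'' : DifferentiableAt ℝ (deriv (deriv f)) x₀) :
    ∀ ε > 0, ∃ δ > 0, ∀ h₁ h₂ : ℝ, 0 < h₁ → h₁ < δ → 0 < h₂ → h₂ < δ →
      |2 / (h₁ + h₂) *
          ((f (x₀ + h₂) - f x₀) / h₂ - (f x₀ - f (x₀ - h₁)) / h₁)
        - deriv (deriv f) x₀
        - (h₂ - h₁) / 3 * deriv (deriv (deriv f)) x₀|
      ≤ ε * (h₁ + h₂) := by
  intro ε hε
  obtain ⟨δ, hδ, hT⟩ := taylor3_peano f x₀ hf hf' hf'' (ε / 2) (by linarith)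
  refine ⟨δ, hδ, ?_⟩
  intro h₁ h₂ p1 l1 p2 l2
  set a := deriv f x₀ with ha
  set b := deriv (deriv f) x₀ with hb
  set c := deriv (deriv (deriv f)) x₀ with hc
  have hr2 : |f (x₀ + h₂) - f x₀ - a * h₂ - b * h₂ ^ 2 / 2 - c * h₂ ^ 3 / 6|
      ≤ ε / 2 * h₂ ^ 3 := by
    have := hT h₂ (by rwa [abs_of_pos p2])
    rwa [abs_of_pos p2] at this
  have hr1 : |f (x₀ - h₁) - f x₀ + a * h₁ - b * h₁ ^ 2 / 2 + c * h₁ ^ 3 / 6|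
      ≤ ε / 2 * h₁ ^ 3 := by
    have := hT (-h₁) (by rwa [abs_neg, abs_of_pos p1])
    rw [abs_neg, abs_of_pos p1] at this
    have e : f (x₀ + -h₁) - f x₀ - a * (-h₁) - b * (-h₁) ^ 2 / 2 - c * (-h₁) ^ 3 / 6
        = f (x₀ - h₁) - f x₀ + a * h₁ - b * h₁ ^ 2 / 2 + c * h₁ ^ 3 / 6 := by
      rw [show x₀ + -h₁ = x₀ - h₁ by ring]; ring
    rwa [e] at this
  have hn1 : h₁ ≠ 0 := ne_of_gt p1
  have hn2 : h₂ ≠ 0 := ne_of_gt p2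
  have hns : h₁ + h₂ ≠ 0 := by positivity
  have key : 2 / (h₁ + h₂) * ((f (x₀ + h₂) - f x₀) / h₂ - (f x₀ - f (x₀ - h₁)) / h₁)
        - b - (h₂ - h₁) / 3 * c
      = 2 / (h₁ + h₂) *
          ((f (x₀ + h₂) - f x₀ - a * h₂ - b * h₂ ^ 2 / 2 - c * h₂ ^ 3 / 6) / h₂
          + (f (x₀ - h₁) - f x₀ + a * h₁ - b * h₁ ^ 2 / 2 + c * h₁ ^ 3 / 6) / h₁) := by
    field_simp
    ring
  rw [key]
  set r₂ := f (x₀ + h₂) - f x₀ - a * h₂ - b * h₂ ^ 2 / 2 - c * h₂ ^ 3 / 6 with hr₂d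
  set r₁ := f (x₀ - h₁) - f x₀ + a * h₁ - b * h₁ ^ 2 / 2 + c * h₁ ^ 3 / 6 with hr₁d
  calc |2 / (h₁ + h₂) * (r₂ / h₂ + r₁ / h₁)|
      = 2 / (h₁ + h₂) * |r₂ / h₂ + r₁ / h₁| := by
        rw [abs_mul, abs_of_pos (by positivity)]
    _ ≤ 2 / (h₁ + h₂) * (|r₂| / h₂ + |r₁| / h₁) := by
        apply mul_le_mul_of_nonneg_left _ (by positivity)
        refine (abs_add_le _ _).trans ?_
        rw [abs_div, abs_div, abs_of_pos p1, abs_of_pos p2]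
    _ ≤ 2 / (h₁ + h₂) * ((ε / 2 * h₂ ^ 3) / h₂ + (ε / 2 * h₁ ^ 3) / h₁) := by
        apply mul_le_mul_of_nonneg_left _ (by positivity)
        gcongr
    _ = ε / (h₁ + h₂) * (h₁ ^ 2 + h₂ ^ 2) := by field_simp; ring
    _ ≤ ε * (h₁ + h₂) := by
        rw [div_mul_eq_mul_div, div_le_iff₀ (by positivity)]
        nlinarith [mul_nonneg hε.le (mul_pos p1 p2).le]
end

section
/- For every real a > 0, the series ∑_{m=0}^∞ 1/((2m+1)² + a²) converges and equals (π/(4a))·tanh(πa/2). -/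
open Real

open Real MeasureTheory Set intervalIntegral
open scoped Nat

noncomputable section

namespace CoshFourier

variable (a : ℝ)

/-- The function whose Fourier series we compute, on `[0,1]`. -/
def coshFun (x : ℝ) : ℂ := Real.cosh (2 * π * a * (x - 1/2))

lemma coshFun_endpoints : coshFun a 0 = coshFun a (0 + 1) := by
  simp only [coshFun, zero_add]
  rw [show 2 * π * a * ((0:ℝ) - 1/2) = -(2 * π * a * ((1:ℝ) - 1/2)) by ring, Real.cosh_neg]

lemma continuous_coshFun : Continuous (coshFun a) := by
  unfold coshFun
  fun_prop

variable {a} (ha : 0 < a) (n : ℤ)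

/-- The antiderivative. -/
def F (x : ℝ) : ℂ :=
  Complex.exp (-(2 * π * Complex.I * n) * x) *
    ((2 * π * a) * Complex.sinh ((2 * π * a) * (x - 1/2)) +
      (2 * π * Complex.I * n) * Complex.cosh ((2 * π * a) * (x - 1/2))) /
    ((2 * π * a) ^ 2 - (2 * π * Complex.I * n) ^ 2)

include ha in
lemma hD : ((2 * π * a : ℂ) ^ 2 - (2 * π * Complex.I * n) ^ 2) ≠ 0 := by
  have : ((2 * π * a : ℂ) ^ 2 - (2 * π * Complex.I * n) ^ 2) =
      ((2 * π * a) ^ 2 + (2 * π * n) ^ 2 : ℝ) := by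
    push_cast
    ring_nf
    rw [Complex.I_sq]
    ring
  rw [this]
  have hπ := Real.pi_pos
  norm_cast
  positivity

include ha in
lemma hasDerivAt_F (x : ℝ) :
    HasDerivAt (F (a := a) n)
      (Complex.exp (-(2 * π * Complex.I * n) * x) *
        Complex.cosh ((2 * π * a) * (x - 1/2))) x := by
  set c : ℂ := (2 * π * a : ℂ) with hc
  set d : ℂ := 2 * π * Complex.I * n with hd
  have key : ∀ z : ℂ, HasDerivAt
      (fun z : ℂ => Complex.exp (-d * z) *
        (c * Complex.sinh (c * (z - 1/2)) + d * Complex.cosh (c * (z - 1/2))) /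
        (c ^ 2 - d ^ 2))
      (Complex.exp (-d * z) * Complex.cosh (c * (z - 1/2))) z := by
    intro z
    have h1 : HasDerivAt (fun z : ℂ => Complex.exp (-d * z)) (Complex.exp (-d * z) * -d) z := by
      simpa using ((hasDerivAt_id z).const_mul (-d)).cexp
    have h2 : HasDerivAt (fun z : ℂ => c * (z - 1/2)) c z := by
      simpa using ((hasDerivAt_id z).sub_const (1/2 : ℂ)).const_mul c
    have h3 := h2.csinh
    have h4 := h2.ccosh
    have h5 := (h1.mul ((h3.const_mul c).add (h4.const_mul d))).div_const (c ^ 2 - d ^ 2)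
    have hDnz := hD ha n
    rw [← hc, ← hd] at hDnz
    refine h5.congr_deriv ?_
    rw [div_eq_iff hDnz]
    simp only [Pi.add_apply]
    ring
  have h := (key x).comp_ofReal
  have hF : F (a := a) n = fun y : ℝ =>
      Complex.exp (-d * y) *
        (c * Complex.sinh (c * ((y:ℂ) - 1/2)) + d * Complex.cosh (c * ((y:ℂ) - 1/2))) /
        (c ^ 2 - d ^ 2) := by
    funext y
    simp only [F, ← hc, ← hd]
  rw [hF]
  exact h


include ha in
lemma fourierCoeffOn_coshFun :
    fourierCoeffOn zero_lt_one (coshFun a) n =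
      ((a * Real.sinh (π * a)) / (π * (a ^ 2 + (n : ℝ) ^ 2)) : ℝ) := by
  rw [fourierCoeffOn_eq_integral]
  have hint : (∫ x in (0:ℝ)..1, (fourier (-n) (x : AddCircle ((1:ℝ) - 0))) • coshFun a x)
      = F (a := a) n 1 - F (a := a) n 0 := by
    rw [← intervalIntegral.integral_eq_sub_of_hasDerivAt (f := F (a := a) n)
      (fun x _ => hasDerivAt_F ha n x) (by apply Continuous.intervalIntegrable; fun_prop)]
    apply intervalIntegral.integral_congr
    intro x hx
    simp only [smul_eq_mul]
    congr 1
    · rw [fourier_coe_apply]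
      congr 1
      push_cast
      ring
    · rw [coshFun]
      push_cast
      norm_num
  rw [hint]
  have he1 : Complex.exp (-(2 * π * Complex.I * n) * (1:ℝ)) = 1 := by
    rw [show -(2 * ↑π * Complex.I * (n:ℂ)) * ((1:ℝ):ℂ) = (-n : ℤ) * (2 * π * Complex.I) by
      push_cast; ring]
    exact Complex.exp_int_mul_two_pi_mul_I (-n)
  have he0 : Complex.exp (-(2 * π * Complex.I * n) * ((0:ℝ):ℂ)) = 1 := by
    norm_num
  rw [F, F, he1, he0]
  have hDr : ((2 * π * a : ℂ) ^ 2 - (2 * π * Complex.I * n) ^ 2) =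
      (((2 * π * a) ^ 2 + (2 * π * n) ^ 2 : ℝ) : ℂ) := by
    push_cast
    ring_nf
    rw [Complex.I_sq]
    ring
  rw [hDr]
  have h1 : ((2 * π * a : ℂ)) * (((1:ℝ):ℂ) - 1/2) = ((π * a : ℝ) : ℂ) := by push_cast; ring
  have h0 : ((2 * π * a : ℂ)) * (((0:ℝ):ℂ) - 1/2) = ((-(π * a) : ℝ) : ℂ) := by push_cast; ring
  rw [h1, h0, ← Complex.ofReal_sinh, ← Complex.ofReal_sinh, ← Complex.ofReal_cosh,
    ← Complex.ofReal_cosh, Real.sinh_neg, Real.cosh_neg]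
  have hπ := Real.pi_pos
  have hden : (((2 * π * a) ^ 2 + (2 * π * n) ^ 2 : ℝ) : ℂ) ≠ 0 := by
    norm_cast
    positivity
  norm_num
  rw [div_sub_div_same, div_eq_div_iff (by push_cast at hden; exact hden)
    (by push_cast; norm_cast; positivity)]
  ring

/-- The coefficient sequence. -/
def r (a : ℝ) (n : ℤ) : ℝ := a * Real.sinh (π * a) / (π * (a ^ 2 + (n : ℝ) ^ 2))

include ha in
lemma summable_inv_sq_add (b : ℝ) (hb : 0 < b) :
    Summable (fun n : ℤ => 1 / (b ^ 2 + (n : ℝ) ^ 2)) := by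
  have base : Summable (fun n : ℕ => 1 / ((n : ℝ) + 1) ^ 2) := by
    have h2 : Summable (fun n : ℕ => 1 / (n : ℝ) ^ 2) :=
      Real.summable_one_div_nat_pow.mpr one_lt_two
    have := (summable_nat_add_iff 1).mpr h2
    refine this.congr fun n => ?_
    push_cast
    ring_nf
  have hnat : Summable (fun n : ℕ => 1 / (b ^ 2 + (n : ℝ) ^ 2)) := by
    refine Summable.of_nonneg_of_le (fun n => by positivity) (fun n => ?_)
      (base.mul_left (2 * (1 + 1 / b ^ 2)))
    rw [mul_one_div, div_le_div_iff₀ (by positivity) (by positivity)]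
    have hb2 : b ^ 2 * (1 / b ^ 2) = 1 := by field_simp
    have hn : (0:ℝ) ≤ (n:ℝ) := Nat.cast_nonneg n
    nlinarith [sq_nonneg ((n:ℝ) - 1), sq_nonneg (n:ℝ), mul_nonneg (mul_nonneg
      (by positivity : (0:ℝ) ≤ 1 / b ^ 2) hn) hn]
  refine Summable.of_nat_of_neg (hnat.congr fun n => by push_cast; ring_nf)
    (hnat.congr fun n => by push_cast; ring_nf)

include ha in
lemma summable_r : Summable (r a) := by
  refine ((summable_inv_sq_add ha a ha).mul_left (a * Real.sinh (π * a) / π)).congr fun n => ?_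
  rw [r, mul_one_div, div_div]

variable (a) in
/-- The periodized function on the circle. -/
def coshCircle : AddCircle (1 : ℝ) → ℂ := AddCircle.liftIco 1 0 (coshFun a)

lemma continuous_coshCircle : Continuous (coshCircle a) :=
  AddCircle.liftIco_zero_continuous (by simpa using coshFun_endpoints a)
    (continuous_coshFun a).continuousOn

include ha in
lemma fourierCoeff_coshCircle : fourierCoeff (coshCircle a) n = (r a n : ℂ) := by
  rw [coshCircle, fourierCoeff_liftIco_eq, r]
  simpa only [zero_add] using fourierCoeffOn_coshFun ha n

include ha in
lemma hasSum_coshCircle (x : AddCircle (1 : ℝ)) :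
    HasSum (fun n : ℤ => (r a n : ℂ) * fourier n x) (coshCircle a x) := by
  have hsummable : Summable (fourierCoeff (coshCircle a)) := by
    rw [funext (fourierCoeff_coshCircle ha)]
    exact Complex.summable_ofReal.mpr (summable_r ha)
  have := has_pointwise_sum_fourier_series_of_summable
    (f := ⟨coshCircle a, continuous_coshCircle⟩) (by exact hsummable) x
  simp only [ContinuousMap.coe_mk] at this
  refine this.congr_fun fun n => ?_
  rw [fourierCoeff_coshCircle ha, smul_eq_mul]

include ha in
lemma hasSum_r : HasSum (r a) (Real.cosh (π * a)) := by
  have h := hasSum_coshCircle ha (0 : AddCircle (1 : ℝ))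
  have h0 : coshCircle a (0 : AddCircle (1 : ℝ)) = ((Real.cosh (π * a) : ℝ) : ℂ) := by
    rw [← QuotientAddGroup.mk_zero, coshCircle,
      AddCircle.liftIco_coe_apply (by norm_num : (0:ℝ) ∈ Set.Ico (0:ℝ) (0 + 1)), coshFun]
    norm_cast
    rw [show 2 * π * a * ((0:ℝ) - 1/2) = -(π * a) by ring, Real.cosh_neg]
  rw [h0] at h
  rw [← Complex.hasSum_ofReal]
  refine h.congr_fun fun n => ?_
  rw [fourier_eval_zero, mul_one]

include ha in
lemma hasSum_r_alt : HasSum (fun n : ℤ => r a n * (-1 : ℝ) ^ n) 1 := by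
  have h := hasSum_coshCircle ha (((1:ℝ)/2 : ℝ) : AddCircle (1 : ℝ))
  have h0 : coshCircle a (((1:ℝ)/2 : ℝ) : AddCircle (1 : ℝ)) = 1 := by
    rw [coshCircle,
      AddCircle.liftIco_coe_apply (by norm_num : (1:ℝ)/2 ∈ Set.Ico (0:ℝ) (0 + 1)), coshFun]
    norm_num
  rw [h0] at h
  rw [← Complex.hasSum_ofReal]
  rw [show ((1:ℝ):ℂ) = 1 by norm_num]
  refine h.congr_fun fun n => ?_
  have hf : (fourier n ((((1:ℝ)/2 : ℝ)) : AddCircle (1:ℝ)) : ℂ) = (-1 : ℂ) ^ n := by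
    rw [fourier_coe_apply]
    rw [show 2 * π * Complex.I * (n:ℂ) * (((1:ℝ)/2 : ℝ):ℂ) / ((1:ℝ):ℂ)
        = (n:ℂ) * (π * Complex.I) by push_cast; ring]
    rw [Complex.exp_int_mul, Complex.exp_pi_mul_I]
  rw [hf]
  push_cast
  ring

end CoshFourier

end

open CoshFourier in
/-- For `a > 0`, `∑_{m=0}^∞ 1/((2m+1)² + a²) = (π/(4a)) tanh(πa/2)`. -/
theorem sum_inv_odd_sq_add_sq (a : ℝ) (ha : 0 < a) :
    HasSum (fun m : ℕ => 1 / ((2 * (m : ℝ) + 1) ^ 2 + a ^ 2))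
      (π / (4 * a) * Real.tanh (π * a / 2)) := by
  have hπ := Real.pi_pos
  set t : ℕ → ℝ := fun m => 1 / ((2 * (m : ℝ) + 1) ^ 2 + a ^ 2) with ht
  -- summability of `t`
  have base : Summable (fun n : ℕ => 1 / ((n : ℝ) + 1) ^ 2) := by
    have h2 : Summable (fun n : ℕ => 1 / (n : ℝ) ^ 2) :=
      Real.summable_one_div_nat_pow.mpr one_lt_two
    have := (summable_nat_add_iff 1).mpr h2
    refine this.congr fun n => ?_
    push_cast
    ring_nf
  have hT : Summable t := by
    refine Summable.of_nonneg_of_le (fun m => by positivity) (fun m => ?_) base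
    have h1 : ((m:ℝ) + 1) ^ 2 ≤ (2 * (m : ℝ) + 1) ^ 2 + a ^ 2 := by
      nlinarith [sq_nonneg (m : ℝ), sq_nonneg a, (Nat.cast_nonneg m : (0:ℝ) ≤ (m:ℝ))]
    show 1 / ((2 * (m:ℝ) + 1) ^ 2 + a ^ 2) ≤ 1 / ((m:ℝ) + 1) ^ 2
    gcongr
  have hTsum : HasSum t (∑' m, t m) := hT.hasSum
  set T : ℝ := ∑' m, t m with hTdef
  -- the odd part of the `ℤ`-indexed sum
  have Hh : HasSum (fun n : ℤ => r a n - r a n * (-1 : ℝ) ^ n) (Real.cosh (π * a) - 1) :=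
    (hasSum_r ha).sub (hasSum_r_alt ha)
  have hinj : Function.Injective (fun k : ℤ => 2 * k + 1) := by
    intro x y hxy
    simp only [] at hxy
    omega
  have hvanish : ∀ x ∉ Set.range (fun k : ℤ => 2 * k + 1),
      r a x - r a x * (-1 : ℝ) ^ x = 0 := by
    intro x hx
    have hev : Even x := by
      rcases Int.even_or_odd x with h | h
      · exact h
      · exact absurd (by obtain ⟨k, hk⟩ := h; exact ⟨k, hk.symm⟩) hx
    rw [hev.neg_one_zpow, mul_one, sub_self]
  have HA : HasSum (fun k : ℤ => 2 * r a (2 * k + 1)) (Real.cosh (π * a) - 1) := by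
    have := (hinj.hasSum_iff hvanish).mpr Hh
    refine this.congr_fun fun k => ?_
    simp only [Function.comp_apply]
    rw [(odd_two_mul_add_one k).neg_one_zpow]
    ring
  -- build the same `ℤ`-indexed sum from the `ℕ`-indexed one
  have hu : HasSum (fun m : ℕ => 2 * r a (2 * (m : ℤ) + 1))
      ((2 * a * Real.sinh (π * a) / π) * T) := by
    have hh := hTsum.mul_left (2 * a * Real.sinh (π * a) / π)
    refine hh.congr_fun fun m => ?_
    rw [r, ht]
    push_cast
    have hden : ((2:ℝ) * m + 1) ^ 2 + a ^ 2 > 0 := by positivity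
    field_simp
    ring
  have HB : HasSum (fun k : ℤ => 2 * r a (2 * k + 1)) (4 * a * Real.sinh (π * a) / π * T) := by
    have hint := hu.int_rec hu
    have heq : (fun k : ℤ => Int.rec (fun m : ℕ => 2 * r a (2 * (m : ℤ) + 1))
        (fun m : ℕ => 2 * r a (2 * (m : ℤ) + 1)) k) = fun k : ℤ => 2 * r a (2 * k + 1) := by
      funext k
      cases k with
      | ofNat m => rfl
      | negSucc m =>
        show 2 * r a (2 * (m : ℤ) + 1) = 2 * r a (2 * Int.negSucc m + 1)
        rw [r, r]
        congr 2
        push_cast [Int.negSucc_eq]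
        ring
    rw [heq] at hint
    convert hint using 1
    ring
  -- conclude
  have hkey : 4 * a * Real.sinh (π * a) / π * T = Real.cosh (π * a) - 1 :=
    HB.unique HA
  have hs2 : 0 < Real.sinh (π * a / 2) := by
    rw [show (0:ℝ) = Real.sinh 0 by rw [Real.sinh_zero]]
    exact Real.sinh_lt_sinh.mpr (by positivity)
  have hc2 : 0 < Real.cosh (π * a / 2) := Real.cosh_pos _
  have hcosh : Real.cosh (π * a) = 2 * Real.cosh (π * a / 2) ^ 2 - 1 := by
    have h := Real.cosh_two_mul (π * a / 2)
    rw [show 2 * (π * a / 2) = π * a by ring] at h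
    rw [h]
    nlinarith [Real.cosh_sq (π * a / 2)]
  have hsinh : Real.sinh (π * a) = 2 * Real.sinh (π * a / 2) * Real.cosh (π * a / 2) := by
    have h := Real.sinh_two_mul (π * a / 2)
    rw [show 2 * (π * a / 2) = π * a by ring] at h
    exact h
  have hsq : Real.cosh (π * a / 2) ^ 2 = Real.sinh (π * a / 2) ^ 2 + 1 := Real.cosh_sq _
  have hs : 0 < Real.sinh (π * a) := by rw [hsinh]; positivity
  have hπ' : π ≠ 0 := ne_of_gt hπ
  have ha' : a ≠ 0 := ne_of_gt ha
  have hs' : Real.sinh (π * a) ≠ 0 := ne_of_gt hs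
  have hTval : T = π / (4 * a) * Real.tanh (π * a / 2) := by
    have h1 : T = (Real.cosh (π * a) - 1) * π / (4 * a * Real.sinh (π * a)) := by
      rw [← hkey]
      field_simp
    rw [h1, Real.tanh_eq_sinh_div_cosh, hcosh, hsinh,
      show 2 * Real.cosh (π * a / 2) ^ 2 - 1 - 1 = 2 * Real.sinh (π * a / 2) ^ 2 by
        nlinarith [hsq]]
    field_simp
  rw [← hTval]
  exact hTsum
end

section
/- The double series ∑_{n=0}^∞ ∑_{m=0}^∞ 1/( (2n+1)²·(2m+1)²·((2n+1)² + (2m+1)²) ) converges and equals (π/4)·∑_{n=0}^∞ (1/(2n+1)⁴)·( π/2 − tanh((π/2)(2n+1))/(2n+1) ). -/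
open Real


noncomputable section

private lemma mrt_exp_neg_int_pi (n : ℤ) : Complex.exp (-(n * (↑π * Complex.I))) = (-1 : ℂ) ^ n := by
  rw [show -((n : ℂ) * (↑π * Complex.I)) = ((-n : ℤ) : ℂ) * (↑π * Complex.I) by push_cast; ring,
    Complex.exp_int_mul, Complex.exp_pi_mul_I, zpow_neg]
  rcases Int.even_or_odd n with h | h
  · rw [h.neg_one_zpow]; norm_num
  · rw [h.neg_one_zpow]; norm_num

private lemma mrt_exp_int_pi (n : ℤ) : Complex.exp (n * (↑π * Complex.I)) = (-1 : ℂ) ^ n := by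
  rw [Complex.exp_int_mul, Complex.exp_pi_mul_I]

private lemma mrt_coeff {a : ℝ} (ha : 0 < a) (n : ℤ) :
    haveI : Fact (0 < 2 * π) := ⟨by positivity⟩
    fourierCoeff (AddCircle.liftIco (2*π) (-π) (fun x : ℝ => Complex.cosh (a*x))) n
      = (-1 : ℂ)^n * (a * Real.sinh (a*π)) / (π * ((a:ℂ)^2 + (n:ℂ)^2)) := by
  haveI : Fact (0 < 2 * π) := ⟨by positivity⟩
  have hπ : (π : ℂ) ≠ 0 := by exact_mod_cast Real.pi_ne_zero
  have haC : (a : ℂ) ≠ 0 := by exact_mod_cast ha.ne'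
  set c₁ : ℂ := (a : ℂ) - n * Complex.I with hc₁
  set c₂ : ℂ := -(a : ℂ) - n * Complex.I with hc₂
  have hc₁0 : c₁ ≠ 0 := by
    intro h
    have := congrArg Complex.re h
    simp [hc₁] at this
    exact ha.ne' this
  have hc₂0 : c₂ ≠ 0 := by
    intro h
    have := congrArg Complex.re h
    simp [hc₂] at this
    exact ha.ne' this
  have hsq : (a:ℂ)^2 + (n:ℂ)^2 = -(c₁ * c₂) := by
    rw [hc₁, hc₂]
    linear_combination (n:ℂ)^2 * Complex.I_sq
  have hden : (a:ℂ)^2 + (n:ℂ)^2 ≠ 0 := by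
    rw [hsq]; exact neg_ne_zero.mpr (mul_ne_zero hc₁0 hc₂0)
  rw [fourierCoeff_liftIco_eq, fourierCoeffOn_eq_integral]
  have hint : ∀ x ∈ Set.uIcc (-π) (-π + 2*π),
      (fourier (-n) (x : AddCircle ((-π + 2*π) - (-π))) • Complex.cosh (a*x))
        = (Complex.exp (c₁ * x) + Complex.exp (c₂ * x)) / 2 := by
    intro x _
    rw [smul_eq_mul, fourier_coe_apply]
    have harg : 2 * (π:ℂ) * Complex.I * ((-n : ℤ) : ℂ) * (x:ℂ) / (((-π + 2*π) - (-π) : ℝ) : ℂ)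
        = -((n:ℂ) * Complex.I * x) := by
      push_cast
      field_simp
      ring
    have hcosh : Complex.cosh ((a:ℂ)*x) = (Complex.exp ((a:ℂ)*x) + Complex.exp (-((a:ℂ)*x)))/2 := by
      rw [← Complex.two_cosh]; ring
    have h1 : Complex.exp (-((n:ℂ)*Complex.I*x)) * Complex.exp ((a:ℂ)*x)
        = Complex.exp (c₁ * x) := by
      rw [← Complex.exp_add, hc₁]; congr 1; ring
    have h2 : Complex.exp (-((n:ℂ)*Complex.I*x)) * Complex.exp (-((a:ℂ)*x))
        = Complex.exp (c₂ * x) := by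
      rw [← Complex.exp_add, hc₂]; congr 1; ring
    rw [harg, hcosh, ← h1, ← h2]
    ring
  rw [intervalIntegral.integral_congr hint]
  have hexpint : ∀ c : ℂ, IntervalIntegrable (fun x : ℝ => Complex.exp (c * x)) MeasureTheory.volume (-π) (-π + 2*π) :=
    fun c => (Complex.continuous_exp.comp (continuous_const.mul Complex.continuous_ofReal)).intervalIntegrable _ _
  have hsplit : ∫ x in (-π)..(-π + 2*π), (Complex.exp (c₁ * x) + Complex.exp (c₂ * x)) / 2
      = ((∫ x in (-π)..(-π + 2*π), Complex.exp (c₁ * x))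
        + ∫ x in (-π)..(-π + 2*π), Complex.exp (c₂ * x)) / 2 := by
    rw [intervalIntegral.integral_div, intervalIntegral.integral_add (hexpint c₁) (hexpint c₂)]
  rw [hsplit, integral_exp_mul_complex hc₁0, integral_exp_mul_complex hc₂0]
  have e1 : Complex.exp (c₁ * ((-π + 2*π : ℝ) : ℂ)) = Real.exp (a*π) * (-1:ℂ)^n := by
    rw [show c₁ * ((-π + 2*π : ℝ) : ℂ) = ((a*π : ℝ) : ℂ) + -((n:ℂ) * ((π:ℂ) * Complex.I)) by
      rw [hc₁]; push_cast; ring]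
    rw [Complex.exp_add, mrt_exp_neg_int_pi, Complex.ofReal_exp]
  have e2 : Complex.exp (c₁ * ((-π : ℝ) : ℂ)) = Real.exp (-(a*π)) * (-1:ℂ)^n := by
    rw [show c₁ * ((-π : ℝ) : ℂ) = ((-(a*π) : ℝ) : ℂ) + ((n:ℂ) * ((π:ℂ) * Complex.I)) by
      rw [hc₁]; push_cast; ring]
    rw [Complex.exp_add, mrt_exp_int_pi, Complex.ofReal_exp]
  have e3 : Complex.exp (c₂ * ((-π + 2*π : ℝ) : ℂ)) = Real.exp (-(a*π)) * (-1:ℂ)^n := by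
    rw [show c₂ * ((-π + 2*π : ℝ) : ℂ) = ((-(a*π) : ℝ) : ℂ) + -((n:ℂ) * ((π:ℂ) * Complex.I)) by
      rw [hc₂]; push_cast; ring]
    rw [Complex.exp_add, mrt_exp_neg_int_pi, Complex.ofReal_exp]
  have e4 : Complex.exp (c₂ * ((-π : ℝ) : ℂ)) = Real.exp (a*π) * (-1:ℂ)^n := by
    rw [show c₂ * ((-π : ℝ) : ℂ) = ((a*π : ℝ) : ℂ) + ((n:ℂ) * ((π:ℂ) * Complex.I)) by
      rw [hc₂]; push_cast; ring]
    rw [Complex.exp_add, mrt_exp_int_pi, Complex.ofReal_exp]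
  rw [e1, e2, e3, e4, Real.sinh_eq, Complex.real_smul]
  rw [hsq]
  push_cast
  field_simp
  ring
private lemma mrt_summable_aux {a : ℝ} (ha : 1 ≤ a) :
    Summable (fun m : ℕ => 1 / (a^2 + ((m:ℝ))^2)) := by
  have h2 : Summable (fun m : ℕ => 2 * (1 / ((m:ℝ)+1)^2)) := by
    have h0 : Summable (fun n : ℕ => 1 / (n:ℝ)^2) :=
      Real.summable_one_div_nat_pow.mpr one_lt_two
    have := h0.comp_injective (add_left_injective 1)
    exact (this.mul_left 2).congr (by intro m; push_cast; simp [Function.comp])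
  refine h2.of_nonneg_of_le (fun m => by positivity) (fun m => ?_)
  rw [div_le_iff₀ (by positivity), mul_one_div, div_mul_eq_mul_div, le_div_iff₀ (by positivity)]
  nlinarith [sq_nonneg ((m:ℝ) - 1)]

private lemma mrt_hasSum_odd {a : ℝ} (ha : 1 ≤ a) :
    HasSum (fun m : ℕ => 1 / (a^2 + (2*(m:ℝ)+1)^2))
      ((Real.cosh (a*π) - 1) * π / (4 * (a * Real.sinh (a*π)))) := by
  have ha0 : (0:ℝ) < a := lt_of_lt_of_le one_pos ha
  haveI : Fact (0 < 2 * π) := ⟨by positivity⟩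
  set f : ℝ → ℂ := fun x : ℝ => Complex.cosh (a*x) with hf
  have hcont : Continuous (AddCircle.liftIco (2*π) (-π) f) := by
    apply AddCircle.liftIco_continuous
    · show Complex.cosh _ = Complex.cosh _
      rw [show (-π + 2*π : ℝ) = π by ring]
      push_cast
      rw [show (a:ℂ) * (-(π:ℂ)) = -(a * π) by ring, Complex.cosh_neg]
    · exact (Complex.continuous_cosh.comp (continuous_const.mul Complex.continuous_ofReal)).continuousOn
  set F : C(AddCircle (2*π), ℂ) := ⟨AddCircle.liftIco (2*π) (-π) f, hcont⟩ with hF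
  have hcoeff : ∀ n : ℤ, fourierCoeff (⇑F) n
      = (-1 : ℂ)^n * (a * Real.sinh (a*π)) / (π * ((a:ℂ)^2 + (n:ℂ)^2)) := mrt_coeff ha0
  have hK0 : (0:ℝ) < a * Real.sinh (a*π) := by
    have : 0 < Real.sinh (a*π) := by rw [show (0:ℝ) = Real.sinh 0 by simp]; exact Real.sinh_lt_sinh.mpr (by positivity)
    positivity
  -- summability of the coefficients
  have hsummable : Summable (fourierCoeff (⇑F)) := by
    have hb : Summable (fun n : ℤ => a * Real.sinh (a*π) / π * (1 / (a^2 + (n:ℝ)^2))) := by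
      apply Summable.mul_left
      apply Summable.of_nat_of_neg
      · exact (mrt_summable_aux ha).congr (fun m => by push_cast; ring_nf)
      · exact (mrt_summable_aux ha).congr (fun m => by push_cast; ring_nf)
    apply Summable.of_norm
    refine hb.of_nonneg_of_le (fun n => norm_nonneg _) (fun n => ?_)
    rw [hcoeff n]
    have h1 : ‖(-1 : ℂ)^n‖ = 1 := by
      rcases Int.even_or_odd n with h | h
      · rw [h.neg_one_zpow]; simp
      · rw [h.neg_one_zpow]; simp
    have h2 : ((a:ℂ)^2 + (n:ℂ)^2) = (((a^2 + (n:ℝ)^2 : ℝ)) : ℂ) := by push_cast; ring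
    rw [norm_div, norm_mul, h1, one_mul, h2]
    rw [show ((π:ℂ) * ((a^2 + (n:ℝ)^2 : ℝ) : ℂ)) = (((π * (a^2 + (n:ℝ)^2) : ℝ)) : ℂ) by push_cast; ring]
    rw [show ((a:ℂ) * (Real.sinh (a*π) : ℂ)) = (((a * Real.sinh (a*π) : ℝ)) : ℂ) by push_cast; ring]
    rw [Complex.norm_real, Complex.norm_real]
    rw [Real.norm_of_nonneg hK0.le, Real.norm_of_nonneg (by positivity)]
    rw [mul_one_div, div_div]
  -- evaluation at -π
  have hmem : (-π : ℝ) ∈ Set.Ico (-π) (-π + (2*π)) := by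
    constructor
    · exact le_refl _
    · nlinarith [Real.pi_pos]
  have hFval : F (((-π : ℝ) : AddCircle (2*π))) = ((Real.cosh (a*π) : ℝ) : ℂ) := by
    show AddCircle.liftIco (2*π) (-π) f (((-π : ℝ) : AddCircle (2*π))) = _
    rw [AddCircle.liftIco_coe_apply hmem]
    show Complex.cosh ((a:ℂ) * ((-π : ℝ):ℂ)) = _
    rw [show (a:ℂ) * ((-π : ℝ):ℂ) = -(((a*π : ℝ)):ℂ) by push_cast; ring,
      Complex.cosh_neg, Complex.ofReal_cosh]
  have hfour : ∀ n : ℤ, (fourier n (((-π : ℝ) : AddCircle (2*π))) : ℂ) = (-1:ℂ)^n := by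
    intro n
    rw [fourier_coe_apply]
    rw [show 2 * (π:ℂ) * Complex.I * (n:ℂ) * ((-π : ℝ):ℂ) / (((2:ℝ) * π : ℝ):ℂ)
        = -((n:ℂ) * ((π:ℂ) * Complex.I)) by
      push_cast
      have hπ : (π : ℂ) ≠ 0 := by exact_mod_cast Real.pi_ne_zero
      field_simp]
    exact mrt_exp_neg_int_pi n
  have hmem0 : (0 : ℝ) ∈ Set.Ico (-π) (-π + (2*π)) := by
    constructor
    · nlinarith [Real.pi_pos]
    · nlinarith [Real.pi_pos]
  have hF0 : F (0 : AddCircle (2*π)) = 1 := by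
    rw [show (0 : AddCircle (2*π)) = (((0:ℝ)) : AddCircle (2*π)) by norm_cast]
    show AddCircle.liftIco (2*π) (-π) f (((0 : ℝ) : AddCircle (2*π))) = _
    rw [AddCircle.liftIco_coe_apply hmem0, hf]
    simp
  have S1 := has_pointwise_sum_fourier_series_of_summable hsummable (((-π : ℝ) : AddCircle (2*π)))
  have S0 := has_pointwise_sum_fourier_series_of_summable hsummable ((0 : AddCircle (2*π)))
  rw [hFval] at S1
  rw [hF0] at S0
  -- combine
  have Hodd : HasSum (fun n : ℤ => (fourierCoeff (⇑F) n * ((-1:ℂ)^n - 1)) / 2)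
      ((((Real.cosh (a*π) - 1) / 2 : ℝ)) : ℂ) := by
    have h := (S1.sub S0).div_const 2
    have heq : (fun n : ℤ => (fourierCoeff (⇑F) n * ((-1:ℂ)^n - 1))/2)
        = fun n : ℤ => (fourierCoeff (⇑F) n • fourier n (((-π:ℝ) : AddCircle (2*π)))
            - fourierCoeff (⇑F) n • fourier n (0 : AddCircle (2*π)))/2 := by
      funext n
      rw [hfour n, fourier_eval_zero, smul_eq_mul, smul_eq_mul]
      ring
    rw [show ((((Real.cosh (a*π) - 1) / 2 : ℝ)) : ℂ)
        = ((Real.cosh (a*π) : ℝ) - 1 : ℂ)/2 by push_cast; ring, heq]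
    exact h
  set K : ℝ := a * Real.sinh (a*π) / π with hKdef
  have hKpos : 0 < K := by
    rw [hKdef]
    exact div_pos hK0 Real.pi_pos
  have hπ : (π : ℂ) ≠ 0 := by exact_mod_cast Real.pi_ne_zero
  have hinj : Function.Injective (fun m : ℤ => 2*m+1) := fun x y h => by dsimp at h; omega
  have hvanish : ∀ x : ℤ, x ∉ Set.range (fun m : ℤ => 2*m+1)
      → (fourierCoeff (⇑F) x * ((-1:ℂ)^x - 1))/2 = 0 := by
    intro x hx
    have hev : Even x := by
      rcases Int.even_or_odd x with h | h
      · exact h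
      · exact absurd ⟨h.choose, h.choose_spec.symm⟩ hx
    rw [hev.neg_one_zpow]
    ring
  have H2 := (hinj.hasSum_iff hvanish).mpr Hodd
  have H3 : HasSum (fun m : ℤ => ((K / (a^2 + (2*(m:ℝ)+1)^2) : ℝ) : ℂ))
      ((((Real.cosh (a*π) - 1) / 2 : ℝ)) : ℂ) := by
    refine H2.congr_fun (fun m => ?_)
    show ((K / (a^2 + (2*(m:ℝ)+1)^2) : ℝ) : ℂ)
        = (fourierCoeff (⇑F) (2*m+1) * ((-1:ℂ)^(2*m+1 : ℤ) - 1))/2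
    rw [hcoeff (2*m+1), Odd.neg_one_zpow ⟨m, by ring⟩]
    have hcast : ((a:ℂ)^2 + (((2*m+1 : ℤ)):ℂ)^2)
        = (((a^2 + (2*(m:ℝ)+1)^2 : ℝ)) : ℂ) := by push_cast; ring
    have hd : (((a^2 + (2*(m:ℝ)+1)^2 : ℝ)) : ℂ) ≠ 0 :=
      Complex.ofReal_ne_zero.mpr (by positivity)
    rw [hcast, hKdef]
    rw [show ((-1 : ℂ)) * ((a:ℂ) * ((Real.sinh (a*π) : ℝ):ℂ))
          / ((π:ℂ) * (((a^2+(2*(m:ℝ)+1)^2 : ℝ)):ℂ)) * ((-1) - 1) / 2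
        = ((a:ℂ) * ((Real.sinh (a*π) : ℝ):ℂ))
          / ((π:ℂ) * (((a^2+(2*(m:ℝ)+1)^2 : ℝ)):ℂ)) from by ring]
    push_cast
    rw [div_div]
  have H4 : HasSum (fun m : ℤ => K / (a^2 + (2*(m:ℝ)+1)^2)) ((Real.cosh (a*π) - 1) / 2) :=
    Complex.hasSum_ofReal.mp H3
  -- fold ℤ to ℕ
  set t : ℕ → ℝ := fun m => K / (a^2 + (2*(m:ℝ)+1)^2) with ht
  have htsum : Summable t := by
    refine ((mrt_summable_aux ha).mul_left K).of_nonneg_of_le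
      (fun m => by positivity) (fun m => ?_)
    rw [ht, mul_one_div]
    apply div_le_div_of_nonneg_left hKpos.le (by positivity)
    nlinarith [sq_nonneg (m:ℝ), Nat.cast_nonneg (α := ℝ) m]
  have hTT : HasSum (fun m : ℤ => K / (a^2 + (2*(m:ℝ)+1)^2)) (∑' m, t m + ∑' m, t m) := by
    have hrec := HasSum.int_rec htsum.hasSum htsum.hasSum
    refine hrec.congr_fun (fun k => ?_)
    rcases k with n | n
    · show K / (a^2 + (2*((Int.ofNat n : ℤ) : ℝ)+1)^2) = t n
      rw [ht]
      norm_num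
    · show K / (a^2 + (2*((Int.negSucc n : ℤ) : ℝ)+1)^2) = t n
      rw [ht, Int.cast_negSucc]
      push_cast
      ring_nf
  have hTval : ∑' m, t m = (Real.cosh (a*π) - 1) / 4 := by
    have huniq := hTT.unique H4
    linarith
  have hfinal := htsum.hasSum
  rw [hTval] at hfinal
  have h5 := hfinal.div_const K
  have h6 : HasSum (fun m : ℕ => 1 / (a^2 + (2*(m:ℝ)+1)^2)) ((Real.cosh (a*π) - 1)/4/K) :=
    h5.congr_fun (fun m => by
      rw [ht]
      have hd : a^2 + (2*(m:ℝ)+1)^2 ≠ 0 := by positivity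
      field_simp)
  rw [show (Real.cosh (a*π) - 1)/4/K = (Real.cosh (a*π) - 1) * π / (4 * (a * Real.sinh (a*π))) from by
    rw [hKdef]
    field_simp] at h6
  exact h6

private lemma mrt_hasSum_odd' {a : ℝ} (ha : 1 ≤ a) :
    HasSum (fun m : ℕ => 1 / (a^2 + (2*(m:ℝ)+1)^2)) (π/(4*a) * Real.tanh (π/2*a)) := by
  have ha0 : (0:ℝ) < a := lt_of_lt_of_le one_pos ha
  have h := mrt_hasSum_odd ha
  have hsy : 0 < Real.sinh (π/2*a) := by
    rw [show (0:ℝ) = Real.sinh 0 by simp]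
    exact Real.sinh_lt_sinh.mpr (by positivity)
  have hcy : 0 < Real.cosh (π/2*a) := Real.cosh_pos _
  have hval : (Real.cosh (a*π) - 1) * π / (4 * (a * Real.sinh (a*π)))
      = π/(4*a) * Real.tanh (π/2*a) := by
    rw [show a*π = 2*(π/2*a) by ring, Real.cosh_two_mul, Real.sinh_two_mul,
      Real.tanh_eq_sinh_div_cosh, Real.cosh_sq]
    field_simp
    ring
  rwa [hval] at h

private lemma mrt_summable_oddsq : Summable (fun n : ℕ => 1 / (2*(n:ℝ)+1)^2) := by
  have h0 : Summable (fun n : ℕ => 1 / (n:ℝ)^2) :=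
    Real.summable_one_div_nat_pow.mpr one_lt_two
  have h1 := h0.comp_injective (add_left_injective 1)
  refine h1.of_nonneg_of_le (fun m => by positivity) (fun m => ?_)
  simp only [Function.comp]
  apply one_div_le_one_div_of_le (by positivity)
  push_cast
  nlinarith [Nat.cast_nonneg (α := ℝ) m]

private lemma mrt_hasSum_oddsq : HasSum (fun n : ℕ => 1 / (2*(n:ℝ)+1)^2) (π^2/8) := by
  have h := hasSum_zeta_two
  have hodd := mrt_summable_oddsq.hasSum
  have heven : HasSum (fun k : ℕ => 1 / ((2*k : ℕ):ℝ)^2) (π^2/24) := by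
    have h4 := (h.mul_left (1/4)).congr_fun (fun k : ℕ => show (1 : ℝ)/((2*k : ℕ):ℝ)^2 = 1/4 * (1/(k:ℝ)^2) from by
      push_cast
      rcases Nat.eq_zero_or_pos k with hk | hk
      · subst hk; norm_num
      · have : ((k:ℝ)) ≠ 0 := by positivity
        field_simp
        ring)
    rwa [show (1:ℝ)/4 * (π^2/6) = π^2/24 by ring] at h4
  have hall : HasSum (fun n : ℕ => 1/(n:ℝ)^2) (π^2/24 + ∑' n : ℕ, 1/(2*(n:ℝ)+1)^2) :=
    HasSum.even_add_odd (f := fun n : ℕ => 1/(n:ℝ)^2) heven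
      (hodd.congr_fun (fun k : ℕ =>
        show (1:ℝ)/((2*k+1 : ℕ):ℝ)^2 = 1/(2*(k:ℝ)+1)^2 from by push_cast; ring))
  have := hall.unique h
  have hval : ∑' n : ℕ, 1/(2*(n:ℝ)+1)^2 = π^2/8 := by linarith
  rwa [hval] at hodd

private lemma mrt_inner (n : ℕ) :
    HasSum (fun m : ℕ =>
        1 / ((2 * (n : ℝ) + 1) ^ 2 * (2 * (m : ℝ) + 1) ^ 2 *
          ((2 * (n : ℝ) + 1) ^ 2 + (2 * (m : ℝ) + 1) ^ 2)))
      (π / 4 * (1 / (2 * (n : ℝ) + 1) ^ 4 *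
        (π / 2 - Real.tanh (π / 2 * (2 * (n : ℝ) + 1)) / (2 * (n : ℝ) + 1)))) := by
  set a : ℝ := 2 * (n : ℝ) + 1 with hadef
  have ha : 1 ≤ a := by
    rw [hadef]
    nlinarith [Nat.cast_nonneg (α := ℝ) n]
  have ha0 : (0:ℝ) < a := lt_of_lt_of_le one_pos ha
  have h := (mrt_hasSum_oddsq.sub (mrt_hasSum_odd' ha)).mul_left (1/a^4)
  have hval : 1/a^4 * (π^2/8 - π/(4*a) * Real.tanh (π/2*a))
      = π / 4 * (1 / a ^ 4 * (π / 2 - Real.tanh (π / 2 * a) / a)) := by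
    field_simp
    ring
  rw [hval] at h
  refine h.congr_fun (fun m => ?_)
  have hb : (0:ℝ) < 2*(m:ℝ)+1 := by positivity
  have hab : (0:ℝ) < a^2 + (2*(m:ℝ)+1)^2 := by positivity
  field_simp
  ring


/-- The double series for the mean reaction time:
`∑_{n,m} 1/((2n+1)²(2m+1)²((2n+1)² + (2m+1)²))`
converges and equals `(π/4) ∑_n (2n+1)⁻⁴ (π/2 − tanh((π/2)(2n+1))/(2n+1))`. -/
theorem double_series_mean_reaction_time :
    HasSum
      (fun p : ℕ × ℕ =>
        1 / ((2 * (p.1 : ℝ) + 1) ^ 2 * (2 * (p.2 : ℝ) + 1) ^ 2 *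
          ((2 * (p.1 : ℝ) + 1) ^ 2 + (2 * (p.2 : ℝ) + 1) ^ 2)))
      (π / 4 *
        ∑' n : ℕ, 1 / (2 * (n : ℝ) + 1) ^ 4 *
          (π / 2 - Real.tanh (π / 2 * (2 * (n : ℝ) + 1)) / (2 * (n : ℝ) + 1))) := by
  set f : ℕ × ℕ → ℝ := fun p =>
    1 / ((2 * (p.1 : ℝ) + 1) ^ 2 * (2 * (p.2 : ℝ) + 1) ^ 2 *
      ((2 * (p.1 : ℝ) + 1) ^ 2 + (2 * (p.2 : ℝ) + 1) ^ 2)) with hfdef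
  have hsumf : Summable f := by
    have hprod := mrt_summable_oddsq.mul_of_nonneg mrt_summable_oddsq
      (fun k => by positivity) (fun k => by positivity)
    refine hprod.of_nonneg_of_le (fun p => by positivity) (fun p => ?_)
    have hA : (1:ℝ) ≤ 2 * (p.1 : ℝ) + 1 := by nlinarith [Nat.cast_nonneg (α := ℝ) p.1]
    have hB : (1:ℝ) ≤ 2 * (p.2 : ℝ) + 1 := by nlinarith [Nat.cast_nonneg (α := ℝ) p.2]
    set A : ℝ := 2 * (p.1 : ℝ) + 1
    set B : ℝ := 2 * (p.2 : ℝ) + 1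
    rw [hfdef]
    show 1 / (A^2 * B^2 * (A^2+B^2)) ≤ 1/A^2 * (1/B^2)
    rw [one_div_mul_one_div]
    apply one_div_le_one_div_of_le (by positivity)
    nlinarith [mul_nonneg (mul_nonneg (sq_nonneg A) (sq_nonneg B))
      (show (0:ℝ) ≤ A^2+B^2-1 by nlinarith)]
  have hg := hsumf.hasSum.prod_fiberwise (fun n => mrt_inner n)
  set h : ℕ → ℝ := fun n => 1 / (2 * (n : ℝ) + 1) ^ 4 *
    (π / 2 - Real.tanh (π / 2 * (2 * (n : ℝ) + 1)) / (2 * (n : ℝ) + 1)) with hhdef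
  have hsumh : Summable h := by
    have := hg.summable.mul_left (4/π)
    refine this.congr (fun n => ?_)
    rw [hhdef]
    field_simp
  have hfin : HasSum (fun n : ℕ => π/4 * h n) (π/4 * ∑' n, h n) := hsumh.hasSum.mul_left _
  have := hg.unique hfin
  rw [← this]
  exact hsumf.hasSum
end
end

section
/- For every l > 0 and every x ∈ ℝ, the double series ∑_{n=0}^∞ ∑_{m=0}^∞ (1 − cos((2n+1)πx/l))/( (2n+1)²·((2n+1)² + (2m+1)²) ) converges and equals (π/4)·∑_{n=0}^∞ (1/(2n+1)³)·tanh((π/2)(2n+1))·(1 − cos((2n+1)πx/l)). -/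
set_option maxHeartbeats 1000000

open Real intervalIntegral

lemma alg_helper (u c m : ℂ) (hu : u ≠ 0) (h1 : c - m ≠ 0) (h2 : -c - m ≠ 0)
    (hd : c^2 - m^2 ≠ 0) :
    u⁻¹/2 * ((u^2 - 1)/(c - m)) + u/2 * (((u^2)⁻¹ - 1)/(-c - m)) =
      c * (u - u⁻¹) / (c^2 - m^2) := by
  have hd' : m^2 - c^2 ≠ 0 := fun h => hd (by linear_combination -h)
  have hX : -(u^3*c^2*4)+u^3*m^2*4 ≠ 0 := by
    intro h
    apply hd'
    have h4 : (4:ℂ) * u^3 * (m^2 - c^2) = 0 := by linear_combination h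
    rcases mul_eq_zero.mp h4 with h5 | h5
    · rcases mul_eq_zero.mp h5 with h6 | h6
      · norm_num at h6
      · exact absurd h6 (pow_ne_zero _ hu)
    · exact h5
  field_simp
  ring

lemma integral_cosh_fourier (a : ℝ) (ha : 0 < a) (n : ℤ) :
    ∫ t in (0:ℝ)..(2*π), Complex.exp (-(n:ℂ) * t * Complex.I) * Complex.cosh (a * (t - π)) =
      ((2 * a * Real.sinh (π * a) / (a^2 + (n:ℝ)^2) : ℝ) : ℂ) := by
  have hk1 : ((a : ℂ) - n * Complex.I) ≠ 0 := by
    intro h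
    have := congrArg Complex.re h
    simp at this
    exact ha.ne' this
  have hk2 : (-(a : ℂ) - n * Complex.I) ≠ 0 := by
    intro h
    have := congrArg Complex.re h
    simp at this
    exact ha.ne' this
  have e : ∀ p q : ℂ, Complex.exp p * Complex.exp q = Complex.exp (p+q) :=
    fun p q => (Complex.exp_add p q).symm
  have hint : ∀ t : ℝ, Complex.exp (-(n:ℂ) * t * Complex.I) * Complex.cosh (a * (t - π)) =
      (Complex.exp (-(a:ℂ)*π)/2) * Complex.exp (((a:ℂ) - n * Complex.I) * t)
      + (Complex.exp ((a:ℂ)*π)/2) * Complex.exp ((-(a:ℂ) - n * Complex.I) * t) := by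
    intro t
    rw [Complex.cosh, ← mul_div_assoc, mul_add, e, e, div_mul_eq_mul_div, div_mul_eq_mul_div,
      e, e, add_div]
    rw [show -(n:ℂ) * t * Complex.I + (a:ℂ) * (t - π) = -(a:ℂ)*π + ((a:ℂ) - n * Complex.I) * t
        by ring,
      show -(n:ℂ) * t * Complex.I + -((a:ℂ) * (t - π)) = (a:ℂ)*π + (-(a:ℂ) - n * Complex.I) * t
        by ring]
  simp_rw [hint]
  rw [intervalIntegral.integral_add ((Continuous.intervalIntegrable (by continuity) _ _))
      ((Continuous.intervalIntegrable (by continuity) _ _)),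
    intervalIntegral.integral_const_mul, intervalIntegral.integral_const_mul,
    integral_exp_mul_complex hk1, integral_exp_mul_complex hk2]
  have hper : Complex.exp (((-n : ℤ) : ℂ) * (2*(π:ℂ)) * Complex.I) = 1 := by
    rw [mul_assoc]; exact Complex.exp_int_mul_two_pi_mul_I (-n)
  set u : ℂ := Complex.exp ((a:ℂ) * π) with hu_def
  have hu : u ≠ 0 := Complex.exp_ne_zero _
  have e1 : Complex.exp (((a:ℂ) - n * Complex.I) * ((2*π : ℝ) : ℂ)) = u^2 := by
    rw [show ((a:ℂ) - n * Complex.I) * ((2*π : ℝ) : ℂ)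
        = ((a:ℂ)*π + (a:ℂ)*π) + ((-n : ℤ) : ℂ) * (2*(π:ℂ)) * Complex.I by push_cast; ring,
      Complex.exp_add, hper, mul_one, Complex.exp_add, sq]
  have e2 : Complex.exp ((-(a:ℂ) - n * Complex.I) * ((2*π : ℝ) : ℂ)) = (u^2)⁻¹ := by
    rw [show (-(a:ℂ) - n * Complex.I) * ((2*π : ℝ) : ℂ)
        = -((a:ℂ)*π + (a:ℂ)*π) + ((-n : ℤ) : ℂ) * (2*(π:ℂ)) * Complex.I by push_cast; ring,
      Complex.exp_add, hper, mul_one, Complex.exp_neg, Complex.exp_add, sq]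
  have e3 : Complex.exp (-(a:ℂ)*π) = u⁻¹ := by
    rw [← Complex.exp_neg]; congr 1; ring
  have e0 : ∀ k : ℂ, Complex.exp (k * ((0:ℝ):ℂ)) = 1 := by
    intro k; simp
  rw [e0, e0, e1, e2, e3]
  have key := alg_helper u (a:ℂ) ((n:ℂ) * Complex.I) hu hk1 hk2 (by
    intro h
    have h2 : ((a:ℂ)^2 + (n:ℂ)^2) = 0 := by
      rw [← h, mul_pow, Complex.I_sq]; ring
    have h3 : a^2 + (n:ℝ)^2 = 0 := by exact_mod_cast h2
    nlinarith [sq_nonneg (n:ℝ)])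
  rw [key, mul_pow, Complex.I_sq]
  have : ((a:ℂ)^2 - (n:ℂ)^2 * (-1)) = ((a^2 + (n:ℝ)^2 : ℝ) : ℂ) := by push_cast; ring
  rw [this]
  have husub : u - u⁻¹ = ((2 * Real.sinh (π * a) : ℝ) : ℂ) := by
    rw [hu_def, ← Complex.exp_neg]
    push_cast
    rw [Complex.sinh]
    ring_nf
  rw [husub]
  push_cast
  ring

instance fact_two_pi : Fact (0 < 2*(π:ℝ)) := ⟨by positivity⟩

noncomputable def Fcosh (a : ℝ) : ℝ → ℂ := fun t => Complex.cosh (a * ((t:ℂ) - π))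

lemma fourierCoeff_cosh (a : ℝ) (ha : 0 < a) (n : ℤ) :
    fourierCoeff (AddCircle.liftIco (2*π) 0 (Fcosh a)) n
      = ((a * Real.sinh (π*a) / (π*(a^2+(n:ℝ)^2)) : ℝ) : ℂ) := by
  rw [fourierCoeff_liftIco_eq, fourierCoeffOn_eq_integral]
  have hπ : (π:ℂ) ≠ 0 := by exact_mod_cast Real.pi_ne_zero
  have hcongr : ∀ t : ℝ, (fourier (-n) (t : AddCircle (0 + 2*π - 0)) : ℂ) • Fcosh a t
      = Complex.exp (-(n:ℂ) * t * Complex.I) * Complex.cosh (a * ((t:ℂ) - π)) := by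
    intro t
    rw [fourier_coe_apply, smul_eq_mul, Fcosh]
    congr 2
    push_cast
    field_simp
    ring
  rw [intervalIntegral.integral_congr (g := fun t : ℝ =>
      Complex.exp (-(n:ℂ) * t * Complex.I) * Complex.cosh (a * ((t:ℂ) - π)))
      (fun t _ => hcongr t)]
  rw [show (0:ℝ) + 2*π = 2*π by ring] at *
  rw [integral_cosh_fourier a ha n]
  have hd : a^2 + (n:ℝ)^2 ≠ 0 := by positivity
  rw [Complex.real_smul]
  have hdC : ((a:ℂ)^2+(n:ℂ)^2) ≠ 0 := by
    have h5 := Complex.ofReal_ne_zero.mpr hd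
    push_cast at h5
    exact h5
  push_cast
  field_simp
  ring

lemma hasSum_cosh_eval (a : ℝ) (ha : 0 < a) :
    HasSum (fun n : ℤ => (1:ℝ)/(a^2+(n:ℝ)^2)) (π * Real.cosh (π*a)/(a*Real.sinh (π*a))) ∧
    HasSum (fun n : ℤ => ((-1:ℝ)^n)/(a^2+(n:ℝ)^2)) (π/(a*Real.sinh (π*a))) := by
  have hπ0 : (0:ℝ) < π := Real.pi_pos
  have hK : 0 < a * Real.sinh (π*a) := mul_pos ha (by rw [← Real.sinh_zero]; exact Real.sinh_lt_sinh.mpr (by positivity))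
  -- continuity of the periodic extension
  have hend : Fcosh a 0 = Fcosh a (2*π) := by
    show Complex.cosh _ = Complex.cosh _
    rw [show (a:ℂ) * (((0:ℝ):ℂ) - π) = -((a:ℂ)*π) by push_cast; ring,
      show (a:ℂ) * (((2*π:ℝ):ℂ) - π) = (a:ℂ)*π by push_cast; ring, Complex.cosh_neg]
  have hcont : Continuous (AddCircle.liftIco (2*π) 0 (Fcosh a)) := by
    apply AddCircle.liftIco_zero_continuous hend
    apply Continuous.continuousOn
    have hFc : Fcosh a = fun t : ℝ => Complex.cosh ((a:ℂ) * ((t:ℂ) - (π:ℂ))) := rfl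
    rw [hFc]
    fun_prop
  set G : C(AddCircle (2*π), ℂ) := ⟨_, hcont⟩ with hG
  have hGcoe : ⇑G = AddCircle.liftIco (2*π) 0 (Fcosh a) := rfl
  -- summability of coefficients
  have hsum_nat : Summable (fun n : ℕ => 1/(a^2+(n:ℝ)^2)) := by
    rw [← summable_nat_add_iff 1]
    have hbase : Summable (fun n : ℕ => 1/((n:ℝ)+1)^2) := by
      have := (summable_nat_add_iff (f := fun n : ℕ => 1/(n:ℝ)^2) 1).mpr
        (summable_one_div_nat_pow.mpr one_lt_two)
      refine this.congr fun n => by push_cast; ring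
    refine Summable.of_nonneg_of_le (fun n => by positivity) (fun n => ?_) hbase
    apply one_div_le_one_div_of_le (by positivity)
    push_cast
    nlinarith [sq_nonneg a]
  have hsum_int : Summable (fun n : ℤ => 1/(a^2+(n:ℝ)^2)) := by
    refine Summable.of_nat_of_neg (hsum_nat.congr fun n => by norm_num) (hsum_nat.congr fun n => ?_)
    push_cast
    ring_nf
  have hsummable : Summable (fun n : ℤ => fourierCoeff (⇑G) n) := by
    rw [hGcoe]
    have : Summable (fun n : ℤ => ((a * Real.sinh (π*a) / (π*(a^2+(n:ℝ)^2)) : ℝ) : ℂ)) := by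
      rw [Complex.summable_ofReal]
      refine ((hsum_int.mul_left (a * Real.sinh (π*a) / π)).congr fun n => ?_)
      field_simp
    exact this.congr fun n => (fourierCoeff_cosh a ha n).symm
  -- evaluation at 0
  have h0 := has_pointwise_sum_fourier_series_of_summable hsummable (((0:ℝ) : AddCircle (2*π)))
  have hπeval := has_pointwise_sum_fourier_series_of_summable hsummable (((π:ℝ) : AddCircle (2*π)))
  rw [hGcoe] at h0 hπeval
  have hG0 : AddCircle.liftIco (2*π) 0 (Fcosh a) ((0:ℝ) : AddCircle (2*π))
      = ((Real.cosh (π*a) : ℝ) : ℂ) := by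
    rw [AddCircle.liftIco_coe_apply ⟨le_refl _, by positivity⟩]
    show Complex.cosh _ = _
    rw [show (a:ℂ) * (((0:ℝ):ℂ) - π) = -(((π*a : ℝ):ℂ)) by push_cast; ring, Complex.cosh_neg,
      ← Complex.ofReal_cosh]
  have hGπ : AddCircle.liftIco (2*π) 0 (Fcosh a) ((π:ℝ) : AddCircle (2*π)) = 1 := by
    rw [AddCircle.liftIco_coe_apply ⟨by positivity, by linarith⟩]
    show Complex.cosh _ = 1
    rw [show (a:ℂ) * (((π:ℝ):ℂ) - π) = 0 by push_cast; ring, Complex.cosh_zero]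
  rw [hG0] at h0
  rw [hGπ] at hπeval
  have hf0 : ∀ n : ℤ, (fourier n (((0:ℝ)) : AddCircle (2*π)) : ℂ) = 1 := by
    intro n
    rw [fourier_coe_apply]
    simp
  have hfπ : ∀ n : ℤ, (fourier n (((π:ℝ)) : AddCircle (2*π)) : ℂ) = ((-1:ℝ)^n : ℝ) := by
    intro n
    rw [fourier_coe_apply]
    have hπC : (π:ℂ) ≠ 0 := by exact_mod_cast Real.pi_ne_zero
    rw [show 2 * (π:ℂ) * Complex.I * n * π / ((2*π : ℝ) : ℂ) = n * ((π:ℂ) * Complex.I) by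
      push_cast; field_simp]
    rw [Complex.exp_int_mul, Complex.exp_pi_mul_I]
    push_cast
    ring
  -- real forms
  have h0R : HasSum (fun n : ℤ => a * Real.sinh (π*a) / (π*(a^2+(n:ℝ)^2))) (Real.cosh (π*a)) := by
    rw [← Complex.hasSum_ofReal]
    refine h0.congr_fun fun n => ?_
    rw [fourierCoeff_cosh a ha n, hf0 n, smul_eq_mul, mul_one]
  have hπR : HasSum (fun n : ℤ => a * Real.sinh (π*a) / (π*(a^2+(n:ℝ)^2)) * (-1:ℝ)^n) (1:ℝ) := by
    have : ((1:ℝ) : ℂ) = 1 := by norm_num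
    rw [← Complex.hasSum_ofReal]
    refine HasSum.congr_fun (this ▸ hπeval) fun n => ?_
    rw [fourierCoeff_cosh a ha n, hfπ n, smul_eq_mul]
    push_cast
    ring
  constructor
  · have := h0R.mul_left (π / (a * Real.sinh (π*a)))
    rw [show π / (a * Real.sinh (π*a)) * Real.cosh (π*a)
        = π * Real.cosh (π*a)/(a*Real.sinh (π*a)) by ring] at this
    refine this.congr_fun fun n => ?_
    have hd : a^2+(n:ℝ)^2 ≠ 0 := by positivity
    field_simp
  · have := hπR.mul_left (π / (a * Real.sinh (π*a)))
    rw [mul_one] at this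
    rw [show π / (a * Real.sinh (π*a)) = π/(a*Real.sinh (π*a)) from rfl] at this
    refine this.congr_fun fun n => ?_
    have hd : a^2+(n:ℝ)^2 ≠ 0 := by positivity
    field_simp

lemma hasSum_odd_inv_sq (a : ℝ) (ha : 0 < a) :
    HasSum (fun m : ℕ => 1/(a^2+(2*(m:ℝ)+1)^2)) (π/(4*a) * Real.tanh (π*a/2)) := by
  obtain ⟨h1, h2⟩ := hasSum_cosh_eval a ha
  have hval : (π * Real.cosh (π*a)/(a*Real.sinh (π*a)) - π/(a*Real.sinh (π*a)))
      = 4 * (π/(4*a) * Real.tanh (π*a/2)) := by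
    have hs2 : Real.sinh (π*a) = 2 * Real.sinh (π*a/2) * Real.cosh (π*a/2) := by
      have h := Real.sinh_two_mul (π*a/2)
      rw [show 2*(π*a/2) = π*a by ring] at h
      exact h
    have hc2 : Real.cosh (π*a) = 1 + 2 * Real.sinh (π*a/2)^2 := by
      have h := Real.cosh_two_mul (π*a/2)
      rw [show 2*(π*a/2) = π*a by ring] at h
      rw [h]
      linarith [Real.cosh_sq_sub_sinh_sq (π*a/2)]
    have hspos : 0 < Real.sinh (π*a/2) := by
      rw [← Real.sinh_zero]
      exact Real.sinh_lt_sinh.mpr (by positivity)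
    have hcpos : 0 < Real.cosh (π*a/2) := Real.cosh_pos _
    rw [hs2, hc2, Real.tanh_eq_sinh_div_cosh]
    field_simp
    ring
  have h3 := (h1.sub h2).nat_add_neg
  have hneg : ∀ n : ℕ, ((-1:ℝ))^(-(n:ℤ)) = (-1:ℝ)^(n:ℕ) := by
    intro n
    rw [zpow_neg, zpow_natCast, ← inv_pow, inv_neg, inv_one]
  have h4 : HasSum (fun n : ℕ => 2*((1 - (-1:ℝ)^n)/(a^2+(n:ℝ)^2)))
      (4 * (π/(4*a) * Real.tanh (π*a/2))) := by
    rw [← hval]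
    have hz : (1:ℝ)/(a^2+((0:ℤ):ℝ)^2) - ((-1:ℝ))^(0:ℤ)/(a^2+((0:ℤ):ℝ)^2) = 0 := by
      norm_num
    rw [hz, add_zero] at h3
    refine h3.congr_fun (fun n => ?_)
    push_cast
    rw [hneg n, zpow_natCast]
    push_cast
    ring
  have hinj : Function.Injective (fun m : ℕ => 2*m+1) := by
    intro x y h; simp only at h; omega
  have h5 : HasSum (fun m : ℕ => 2*((1 - (-1:ℝ)^(2*m+1))/(a^2+((2*m+1 : ℕ):ℝ)^2)))
      (4 * (π/(4*a) * Real.tanh (π*a/2))) := by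
    refine (Function.Injective.hasSum_iff hinj (fun n hn => ?_)).mpr h4
    have heven : Even n := by
      rcases Nat.even_or_odd n with h | h
      · exact h
      · obtain ⟨m, hm⟩ := h
        exact absurd ⟨m, by simp only; omega⟩ hn
    rw [heven.neg_one_pow]
    norm_num
  have h6 := h5.div_const 4
  rw [show 4 * (π/(4*a) * Real.tanh (π*a/2)) / 4 = π/(4*a) * Real.tanh (π*a/2) by ring] at h6
  refine h6.congr_fun fun m => ?_
  have hodd : Odd (2*m+1) := ⟨m, by ring⟩
  rw [hodd.neg_one_pow]
  push_cast
  ring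

lemma my_tanh_nonneg {y : ℝ} (hy : 0 ≤ y) : 0 ≤ Real.tanh y := by
  rw [Real.tanh_eq_sinh_div_cosh]
  exact div_nonneg (Real.sinh_nonneg_iff.mpr hy) (Real.cosh_pos y).le

lemma my_tanh_le_one (y : ℝ) : Real.tanh y ≤ 1 := by
  rw [Real.tanh_eq_sinh_div_cosh, div_le_one (Real.cosh_pos y)]
  nlinarith [Real.exp_pos (-y), Real.cosh_eq y, Real.sinh_eq y]

/-- The double series for the reaction-location CDF:
`∑_{n,m} (1 − cos((2n+1)πx/l))/((2n+1)²((2n+1)² + (2m+1)²))` converges and equals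
`(π/4) ∑_n (2n+1)⁻³ tanh((π/2)(2n+1))(1 − cos((2n+1)πx/l))`. -/
theorem double_series_reaction_location (l x : ℝ) (hl : 0 < l) :
    HasSum
      (fun p : ℕ × ℕ =>
        (1 - Real.cos ((2 * (p.1 : ℝ) + 1) * π * x / l)) /
          ((2 * (p.1 : ℝ) + 1) ^ 2 *
            ((2 * (p.1 : ℝ) + 1) ^ 2 + (2 * (p.2 : ℝ) + 1) ^ 2)))
      (π / 4 *
        ∑' n : ℕ, 1 / (2 * (n : ℝ) + 1) ^ 3 *
          Real.tanh (π / 2 * (2 * (n : ℝ) + 1)) *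
          (1 - Real.cos ((2 * (n : ℝ) + 1) * π * x / l))) := by
  set f : ℕ × ℕ → ℝ := fun p =>
    (1 - Real.cos ((2 * (p.1 : ℝ) + 1) * π * x / l)) /
      ((2 * (p.1 : ℝ) + 1) ^ 2 *
        ((2 * (p.1 : ℝ) + 1) ^ 2 + (2 * (p.2 : ℝ) + 1) ^ 2)) with hf
  set g : ℕ → ℝ := fun n => 1 / (2 * (n : ℝ) + 1) ^ 3 *
      Real.tanh (π / 2 * (2 * (n : ℝ) + 1)) *
      (1 - Real.cos ((2 * (n : ℝ) + 1) * π * x / l)) with hg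
  have hA : ∀ n : ℕ, (0:ℝ) < 2*(n:ℝ)+1 := fun n => by positivity
  have hCnonneg : ∀ n : ℕ, 0 ≤ 1 - Real.cos ((2 * (n : ℝ) + 1) * π * x / l) :=
    fun n => by nlinarith [Real.cos_le_one ((2 * (n : ℝ) + 1) * π * x / l)]
  have hCle : ∀ n : ℕ, 1 - Real.cos ((2 * (n : ℝ) + 1) * π * x / l) ≤ 2 :=
    fun n => by nlinarith [Real.neg_one_le_cos ((2 * (n : ℝ) + 1) * π * x / l)]
  -- fiberwise sums
  have hfib : ∀ n : ℕ, HasSum (fun m : ℕ => f (n, m)) (π / 4 * g n) := by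
    intro n
    have h := (hasSum_odd_inv_sq (2*(n:ℝ)+1) (hA n)).mul_left
      ((1 - Real.cos ((2*(n:ℝ)+1)*π*x/l)) / (2*(n:ℝ)+1)^2)
    have hval : (1 - Real.cos ((2*(n:ℝ)+1)*π*x/l)) / (2*(n:ℝ)+1)^2 *
        (π/(4*(2*(n:ℝ)+1)) * Real.tanh (π*(2*(n:ℝ)+1)/2)) = π / 4 * g n := by
      rw [show π*(2*(n:ℝ)+1)/2 = π/2*(2*(n:ℝ)+1) by ring, hg]
      have h0 := hA n
      field_simp
    rw [hval] at h
    refine h.congr_fun fun m => ?_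
    rw [hf]
    show _ = _ / _ * (1 / _)
    rw [mul_one_div, div_div]
  -- nonnegativity
  have hfnonneg : ∀ p : ℕ × ℕ, 0 ≤ f p := by
    intro p
    apply div_nonneg (hCnonneg p.1)
    positivity
  -- summability of g-related series
  have hgs : Summable g := by
    have hbase : Summable (fun n : ℕ => 2/((n:ℝ)+1)^3) := by
      apply Summable.mul_left
      have := (summable_nat_add_iff (f := fun n : ℕ => 1/(n:ℝ)^3) 1).mpr
        (summable_one_div_nat_pow.mpr (by norm_num))
      refine this.congr fun n => by push_cast; ring
    refine Summable.of_nonneg_of_le (fun n => ?_) (fun n => ?_) hbase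
    · rw [hg]
      have := hA n
      have := my_tanh_nonneg (y := π/2*(2*(n:ℝ)+1)) (by positivity)
      have := hCnonneg n
      positivity
    · rw [hg]
      calc 1 / (2 * (n : ℝ) + 1) ^ 3 * Real.tanh (π / 2 * (2 * (n : ℝ) + 1)) *
            (1 - Real.cos ((2 * (n : ℝ) + 1) * π * x / l))
          ≤ 1 / ((n:ℝ) + 1) ^ 3 * 1 * 2 := by
            have h1 : 1 / (2 * (n : ℝ) + 1) ^ 3 ≤ 1 / ((n:ℝ) + 1) ^ 3 := by
              apply one_div_le_one_div_of_le (by positivity)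
              apply pow_le_pow_left₀ (by positivity)
              · nlinarith [Nat.cast_nonneg (α := ℝ) n]
            have h2 := my_tanh_le_one (π / 2 * (2 * (n : ℝ) + 1))
            have h3 := my_tanh_nonneg (y := π/2*(2*(n:ℝ)+1)) (by positivity)
            have h4 := hCnonneg n
            have h5 := hCle n
            have h6 : (0:ℝ) ≤ 1 / (2 * (n : ℝ) + 1) ^ 3 := by positivity
            have h7 : (0:ℝ) ≤ 1 / ((n:ℝ) + 1) ^ 3 := by positivity
            nlinarith [mul_nonneg h6 h3]
        _ = 2/((n:ℝ)+1)^3 := by ring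
  have hgsum : Summable (fun n : ℕ => π / 4 * g n) := hgs.mul_left _
  -- summability on the product
  have hfsummable : Summable f := by
    rw [summable_prod_of_nonneg hfnonneg]
    constructor
    · exact fun n => (hfib n).summable
    · refine hgsum.congr fun n => ?_
      exact ((hfib n).tsum_eq).symm
  have hfs := hfsummable.hasSum
  have htot : HasSum (fun n : ℕ => π / 4 * g n) (∑' p, f p) :=
    HasSum.prod_fiberwise hfs hfib
  have hS : HasSum (fun n : ℕ => π / 4 * g n) (π / 4 * ∑' n, g n) :=
    hgs.hasSum.mul_left _
  have hkey : ∑' p, f p = π / 4 * ∑' n, g n := htot.unique hS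
  rw [← hkey]
  exact hfs
end

section
/- Let V : ℝ → ℝ be any function, D > 0, h > 0, and consider the uniform mesh x_i = x₀ + i·h for i ∈ ℤ with Wang–Peskin–Elston jump rates a_{ij} = (D/h²)·A(V(x_j) − V(x_i)) between nearest neighbors. Then the discrete Gibbs–Boltzmann weights p_i = exp(−V(x_i)) form a stationary solution of the master equation: for every i ∈ ℤ, a_{i−1,i}·p_{i−1} − (a_{i,i−1} + a_{i,i+1})·p_i + a_{i+1,i}·p_{i+1} = 0. -/
open Real

lemma wpeA_flux (a b : ℝ) :
    wpeA (b - a) * Real.exp (-a) = wpeA (a - b) * Real.exp (-b) := by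
  unfold wpeA
  rcases eq_or_ne b a with h | h
  · simp [h]
  · rw [if_neg (sub_ne_zero.mpr h), if_neg (sub_ne_zero.mpr h.symm)]
    have h1 : Real.exp (b - a) - 1 ≠ 0 := by
      simp [Real.exp_eq_one_iff, sub_eq_zero, h]
    have h2 : Real.exp (a - b) - 1 ≠ 0 := by
      simp [Real.exp_eq_one_iff, sub_eq_zero, h.symm]
    field_simp
    rw [Real.exp_sub, Real.exp_sub, Real.exp_neg, Real.exp_neg]
    have ea := Real.exp_ne_zero a
    have eb := Real.exp_ne_zero b
    field_simp
    ring

/-- On the uniform mesh `x_i = x₀ + i h` with Wang–Peskin–Elston jump rates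
`a_{ij} = (D/h²) A(V(x_j) − V(x_i))`, the discrete Gibbs–Boltzmann weights
`p_i = exp(−V(x_i))` are a stationary solution of the master equation. -/
theorem wpe_gibbs_boltzmann_stationary (V : ℝ → ℝ) (D h x₀ : ℝ)
    (hD : 0 < D) (hh : 0 < h) :
    ∀ i : ℤ,
      (D / h ^ 2 * wpeA (V (x₀ + (i : ℝ) * h) - V (x₀ + ((i : ℤ) - 1 : ℤ) * h))) *
          Real.exp (-V (x₀ + ((i : ℤ) - 1 : ℤ) * h))
        - (D / h ^ 2 * wpeA (V (x₀ + ((i : ℤ) - 1 : ℤ) * h) - V (x₀ + (i : ℝ) * h))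
            + D / h ^ 2 * wpeA (V (x₀ + ((i : ℤ) + 1 : ℤ) * h) - V (x₀ + (i : ℝ) * h))) *
          Real.exp (-V (x₀ + (i : ℝ) * h))
        + (D / h ^ 2 * wpeA (V (x₀ + (i : ℝ) * h) - V (x₀ + ((i : ℤ) + 1 : ℤ) * h))) *
          Real.exp (-V (x₀ + ((i : ℤ) + 1 : ℤ) * h)) = 0 := by
  intro i
  have h1 := wpeA_flux (V (x₀ + ((i : ℤ) - 1 : ℤ) * h)) (V (x₀ + (i : ℝ) * h))
  have h2 := wpeA_flux (V (x₀ + ((i : ℤ) + 1 : ℤ) * h)) (V (x₀ + (i : ℝ) * h))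
  linear_combination (D / h ^ 2) * h1 + (D / h ^ 2) * h2
end
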